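/- arXiv:1802.09590 — 4 statements merged into one kernel-verified Lean document; each statement's English description precedes it below -/
import Mathlib

section
/- Let n ≥ 2, let i ∈ {2,…,n}, let p ≥ 0, and let A ∈ ℝ^{n×n} be an elementary bidiagonal matrix, i.e. either A = I + p·E_{i,i−1} or A = I + p·E_{i−1,i}, where E_{k,l} denotes the n×n matrix whose (k,l) entry is 1 and all other entries are 0. Then for every x ∈ ℝ^n one has s^-(Ax) ≤ s^-(x) and s^+(Ax) ≤ s^+(x). -/
open Matrix MeasureTheory Set Polynomial Filter

noncomputable section

/-- Number of sign changes between adjacent entries of a list of reals. -/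
def signChanges : List ℝ → ℕ
  | [] => 0
  | [_] => 0
  | a :: b :: l => (if a * b < 0 then 1 else 0) + signChanges (b :: l)

/-- `s^-(y)`: the number of sign variations in `y` after deleting all zero entries. -/
def sMinus {n : ℕ} (y : Fin n → ℝ) : ℕ :=
  signChanges ((List.ofFn y).filter (fun x => decide (x ≠ 0)))

/-- `s^+(y)`: the maximal number of sign variations in `y` after each zero entry is
replaced by either `+1` or `-1`. -/
def sPlus {n : ℕ} (y : Fin n → ℝ) : ℕ :=
  Finset.univ.sup fun ε : Fin n → Bool =>
    signChanges (List.ofFn fun i => if y i = 0 then (if ε i then (1:ℝ) else -1) else y i)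

/-- A matrix is totally positive if all its minors are positive. -/
def IsTP {n m : ℕ} (A : Matrix (Fin n) (Fin m) ℝ) : Prop :=
  ∀ (k : ℕ) (r : Fin k → Fin n) (c : Fin k → Fin m),
    StrictMono r → StrictMono c → 0 < (A.submatrix r c).det

/-- A matrix is totally nonnegative if all its minors are nonnegative. -/
def IsTN {n m : ℕ} (A : Matrix (Fin n) (Fin m) ℝ) : Prop :=
  ∀ (k : ℕ) (r : Fin k → Fin n) (c : Fin k → Fin m),
    StrictMono r → StrictMono c → 0 ≤ (A.submatrix r c).det

/-- Tridiagonal with nonnegative sub- and super-diagonal entries. -/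
def InM {n : ℕ} (A : Matrix (Fin n) (Fin n) ℝ) : Prop :=
  (∀ i j : Fin n, ((i : ℕ) + 1 < (j : ℕ) ∨ (j : ℕ) + 1 < (i : ℕ)) → A i j = 0) ∧
  (∀ i j : Fin n, ((i : ℕ) = (j : ℕ) + 1 ∨ (j : ℕ) = (i : ℕ) + 1) → 0 ≤ A i j)

/-- Tridiagonal with positive sub- and super-diagonal entries. -/
def InMPlus {n : ℕ} (A : Matrix (Fin n) (Fin n) ℝ) : Prop :=
  (∀ i j : Fin n, ((i : ℕ) + 1 < (j : ℕ) ∨ (j : ℕ) + 1 < (i : ℕ)) → A i j = 0) ∧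
  (∀ i j : Fin n, ((i : ℕ) = (j : ℕ) + 1 ∨ (j : ℕ) = (i : ℕ) + 1) → 0 < A i j)

/-- `A` is measurable and locally essentially bounded on `(a,b)` (entrywise). -/
def GoodCoeff {n : ℕ} (a b : ℝ) (A : ℝ → Matrix (Fin n) (Fin n) ℝ) : Prop :=
  (∀ i j, Measurable fun t => A t i j) ∧
  ∀ K : Set ℝ, K ⊆ Set.Ioo a b → IsCompact K →
    ∃ C : ℝ, ∀ᵐ t ∂volume, t ∈ K → ∀ i j, |A t i j| ≤ C

/-- `Φ` is the transition matrix of `ż = A(t)z` on `(a,b)`, encoded through the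
equivalent integral equation `Φ(t,t0) = I + ∫_{t0}^t A(s)Φ(s,t0) ds`. -/
def IsTransitionOn {n : ℕ} (a b : ℝ) (A : ℝ → Matrix (Fin n) (Fin n) ℝ)
    (Φ : ℝ → ℝ → Matrix (Fin n) (Fin n) ℝ) : Prop :=
  ∀ t0 ∈ Set.Ioo a b, ∀ t ∈ Set.Ioo a b, ∀ i j,
    Φ t t0 i j = (1 : Matrix (Fin n) (Fin n) ℝ) i j + ∫ s in t0..t, (A s * Φ s t0) i j


namespace SC


/-- sign-change indicator -/
noncomputable def chg (a b : ℝ) : ℕ := if a * b < 0 then 1 else 0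

lemma sc_nil : signChanges [] = 0 := by simp [signChanges]
lemma sc_single (a : ℝ) : signChanges [a] = 0 := by simp [signChanges]
lemma sc_cons_cons (a b : ℝ) (l : List ℝ) :
    signChanges (a :: b :: l) = chg a b + signChanges (b :: l) := by
  simp [signChanges, chg]

lemma chg_comm (a b : ℝ) : chg a b = chg b a := by simp [chg, mul_comm]

lemma chg_congr_left {a a' : ℝ} (h : 0 < a * a') (b : ℝ) : chg a b = chg a' b := by
  unfold chg
  have : a * b < 0 ↔ a' * b < 0 := by
    constructor <;> intro hb <;> nlinarith [sq_nonneg (a + a'), sq_nonneg (a - a'), sq_nonneg a, sq_nonneg a']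
  simp [this]

lemma chg_triangle (a b c : ℝ) (hb : b ≠ 0) : chg a c ≤ chg a b + chg b c := by
  unfold chg
  by_cases hac : a * c < 0
  · have ha : a ≠ 0 := by intro h; rw [h] at hac; simp at hac
    by_cases hab : a * b < 0
    · simp only [if_pos hac, if_pos hab]; omega
    · have hab' : 0 < a * b := lt_of_le_of_ne (not_lt.1 hab)
        (by intro h; rcases mul_eq_zero.1 h.symm with h | h <;> [exact ha h; exact hb h])
      have hbc : b * c < 0 := by nlinarith [sq_nonneg a, sq_nonneg b]
      simp only [if_pos hac, if_neg hab, if_pos hbc]; omega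
  · simp only [if_neg hac]; omega

lemma head_swap {a a' : ℝ} (h : 0 < a * a') (l : List ℝ) :
    signChanges (a :: l) = signChanges (a' :: l) := by
  cases l with
  | nil => simp [sc_single]
  | cons b t => rw [sc_cons_cons, sc_cons_cons, chg_congr_left h]

lemma sc_le_cons (a : ℝ) (l : List ℝ) : signChanges l ≤ signChanges (a :: l) := by
  cases l with
  | nil => simp [sc_nil]
  | cons b t => rw [sc_cons_cons]; omega

/-- splitting lemma -/
lemma sc_append_cons (L : List ℝ) (a : ℝ) (R : List ℝ) :
    signChanges (L ++ a :: R) = signChanges (L ++ [a]) + signChanges (a :: R) := by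
  induction L with
  | nil => simp [sc_single]
  | cons x L' ih =>
    cases L' with
    | nil =>
      simp only [List.cons_append, List.nil_append, sc_cons_cons, sc_single]
      omega
    | cons y L'' =>
      simp only [List.cons_append, sc_cons_cons] at *
      omega

lemma sc_reverse (l : List ℝ) : signChanges l.reverse = signChanges l := by
  induction l with
  | nil => rfl
  | cons a t ih =>
    cases t with
    | nil => rfl
    | cons b l' =>
      have h1 : (a :: b :: l').reverse = l'.reverse ++ b :: [a] := by simp
      rw [h1, sc_append_cons l'.reverse b [a]]
      have h2 : l'.reverse ++ [b] = (b :: l').reverse := by simp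
      rw [h2, ih, sc_cons_cons b a [], sc_cons_cons a b l', chg_comm, sc_single]
      omega

lemma snoc_swap {a a' : ℝ} (h : 0 < a * a') (L : List ℝ) :
    signChanges (L ++ [a]) = signChanges (L ++ [a']) := by
  have e1 : signChanges (L ++ [a]) = signChanges (a :: L.reverse) := by
    rw [← sc_reverse (a :: L.reverse)]; simp
  have e2 : signChanges (L ++ [a']) = signChanges (a' :: L.reverse) := by
    rw [← sc_reverse (a' :: L.reverse)]; simp
  rw [e1, e2, head_swap h]

/-- middle swap with same sign -/
lemma mid_swap {a a' : ℝ} (h : 0 < a * a') (L R : List ℝ) :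
    signChanges (L ++ a :: R) = signChanges (L ++ a' :: R) := by
  rw [sc_append_cons L a R, sc_append_cons L a' R, head_swap h R, snoc_swap h L]

/-- collapse a same-sign duplicate -/
lemma mid_collapse {a c : ℝ} (h : 0 < a * c) (L R : List ℝ) :
    signChanges (L ++ a :: c :: R) = signChanges (L ++ a :: R) := by
  rw [sc_append_cons L a (c :: R), sc_append_cons L a R]
  congr 1
  rw [sc_cons_cons]
  have hch : chg a c = 0 := by simp [chg, not_lt.2 (le_of_lt h)]
  rw [hch, head_swap (by nlinarith : (0:ℝ) < c * a) R]
  omega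

/-- key triangle replacement, right-neighbor version. -/
lemma key_right {d s t : ℝ} (hds : 0 < d * s) (ht : t ≠ 0) (L R : List ℝ) :
    signChanges (L ++ d :: s :: R) ≤ signChanges (L ++ d :: t :: R) := by
  rw [sc_append_cons L d (s :: R), sc_append_cons L d (t :: R)]
  refine Nat.add_le_add_left ?_ _
  rw [sc_cons_cons d s R, sc_cons_cons d t R]
  have h0 : chg d s = 0 := by simp [chg, not_lt.2 (le_of_lt hds)]
  rw [h0, head_swap (by nlinarith : (0:ℝ) < s * d) R]
  cases R with
  | nil => simp [sc_single]
  | cons r R' =>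
    rw [sc_cons_cons d r R', sc_cons_cons t r R']
    have := chg_triangle d t r ht
    omega

/-- key triangle replacement, left-neighbor version. -/
lemma key_left {d s t : ℝ} (hds : 0 < d * s) (ht : t ≠ 0) (L R : List ℝ) :
    signChanges (L ++ s :: d :: R) ≤ signChanges (L ++ t :: d :: R) := by
  rw [← sc_reverse (L ++ s :: d :: R), ← sc_reverse (L ++ t :: d :: R)]
  have h1 : (L ++ s :: d :: R).reverse = R.reverse ++ d :: s :: L.reverse := by simp
  have h2 : (L ++ t :: d :: R).reverse = R.reverse ++ d :: t :: L.reverse := by simp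
  rw [h1, h2]
  exact key_right hds ht _ _

lemma cons_le_cons_cons {a' : ℝ} (ha' : a' ≠ 0) (a : ℝ) (l : List ℝ) :
    signChanges (a :: l) ≤ signChanges (a :: a' :: l) := by
  cases l with
  | nil => simp [sc_single, sc_cons_cons]
  | cons b t =>
    rw [sc_cons_cons a b t, sc_cons_cons a a' (b :: t), sc_cons_cons a' b t]
    have := chg_triangle a a' b ha'
    omega

lemma sublist_aux {l₁ l₂ : List ℝ} (h : l₁.Sublist l₂) (hnz : ∀ x ∈ l₂, x ≠ 0) :
    signChanges l₁ ≤ signChanges l₂ ∧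
      ∀ a : ℝ, a ≠ 0 → signChanges (a :: l₁) ≤ signChanges (a :: l₂) := by
  induction h with
  | slnil => exact ⟨le_refl _, fun a _ => le_refl _⟩
  | @cons l₁ l₂ a' h ih =>
    have ha' : a' ≠ 0 := hnz a' (by simp)
    have hnz' : ∀ x ∈ l₂, x ≠ 0 := fun x hx => hnz x (by simp [hx])
    obtain ⟨ih1, ih2⟩ := ih hnz'
    constructor
    · exact le_trans ih1 (sc_le_cons a' l₂)
    · intro a ha
      exact le_trans (ih2 a ha) (cons_le_cons_cons ha' a l₂)
  | @cons_cons l₁ l₂ a' h ih =>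
    have ha' : a' ≠ 0 := hnz a' (by simp)
    have hnz' : ∀ x ∈ l₂, x ≠ 0 := fun x hx => hnz x (by simp [hx])
    obtain ⟨ih1, ih2⟩ := ih hnz'
    refine ⟨ih2 a' ha', fun a ha => ?_⟩
    rw [sc_cons_cons, sc_cons_cons]
    exact Nat.add_le_add_left (ih2 a' ha') _

lemma sc_sublist {l₁ l₂ : List ℝ} (h : l₁.Sublist l₂) (hnz : ∀ x ∈ l₂, x ≠ 0) :
    signChanges l₁ ≤ signChanges l₂ :=
  (sublist_aux h hnz).1



lemma mem_filter_ne {l : List ℝ} : ∀ x ∈ l.filter (fun x => decide (x ≠ 0)), x ≠ 0 := by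
  intro x hx
  have := (List.mem_filter.1 hx).2
  simpa using this

lemma sminus_key_right (p : ℝ) (hp : 0 ≤ p) (L R : List ℝ) (a b : ℝ) :
    signChanges ((L ++ a :: (b + p * a) :: R).filter (fun x => decide (x ≠ 0))) ≤
      signChanges ((L ++ a :: b :: R).filter (fun x => decide (x ≠ 0))) := by
  by_cases ha : a = 0
  · have h1 : b + p * a = b := by rw [ha]; ring
    rw [h1]
  · set c := b + p * a with hc
    by_cases hc0 : c = 0
    · have hl : (L ++ a :: c :: R).filter (fun x => decide (x ≠ 0)) =
          L.filter (fun x => decide (x ≠ 0)) ++ a :: R.filter (fun x => decide (x ≠ 0)) := by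
        simp [ha, hc0]
      by_cases hb : b = 0
      · have hr : (L ++ a :: b :: R).filter (fun x => decide (x ≠ 0)) =
            L.filter (fun x => decide (x ≠ 0)) ++ a :: R.filter (fun x => decide (x ≠ 0)) := by
          simp [ha, hb]
        rw [hl, hr]
      · have hr : (L ++ a :: b :: R).filter (fun x => decide (x ≠ 0)) =
            L.filter (fun x => decide (x ≠ 0)) ++ a :: b :: R.filter (fun x => decide (x ≠ 0)) := by
          simp [ha, hb]
        rw [hl, hr]
        apply sc_sublist
        · exact List.Sublist.append (List.Sublist.refl _)
            (List.Sublist.cons₂ a (List.Sublist.cons b (List.Sublist.refl _)))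
        · intro x hx
          have : x ∈ L.filter (fun x => decide (x ≠ 0)) ∨ x = a ∨ x = b ∨
              x ∈ R.filter (fun x => decide (x ≠ 0)) := by
            simpa [List.mem_append, List.mem_cons, or_assoc] using hx
          rcases this with h | h | h | h
          · exact mem_filter_ne x h
          · rw [h]; exact ha
          · rw [h]; exact hb
          · exact mem_filter_ne x h
    · have hl : (L ++ a :: c :: R).filter (fun x => decide (x ≠ 0)) =
          L.filter (fun x => decide (x ≠ 0)) ++ a :: c :: R.filter (fun x => decide (x ≠ 0)) := by
        simp [ha, hc0]
      rw [hl]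
      by_cases hcb : 0 < c * b
      · have hb : b ≠ 0 := by intro h; rw [h] at hcb; simp at hcb
        have hr : (L ++ a :: b :: R).filter (fun x => decide (x ≠ 0)) =
            L.filter (fun x => decide (x ≠ 0)) ++ a :: b :: R.filter (fun x => decide (x ≠ 0)) := by
          simp [ha, hb]
        rw [hr]
        have := mid_swap hcb (L.filter (fun x => decide (x ≠ 0)) ++ [a])
          (R.filter (fun x => decide (x ≠ 0)))
        simpa using this.le
      · have hac : 0 < a * c := by
          have hcb' : c * b ≤ 0 := not_lt.1 hcb
          by_contra h
          have h' : a * c ≤ 0 := not_lt.1 h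
          have h2 : 0 ≤ p * (-(a * c)) := mul_nonneg hp (by linarith)
          have h3 : c * c = c * b + p * (a * c) := by rw [hc]; ring
          nlinarith [mul_self_pos.mpr hc0]
        by_cases hb : b = 0
        · have hr : (L ++ a :: b :: R).filter (fun x => decide (x ≠ 0)) =
              L.filter (fun x => decide (x ≠ 0)) ++ a :: R.filter (fun x => decide (x ≠ 0)) := by
            simp [ha, hb]
          rw [hr]
          exact (mid_collapse hac _ _).le
        · have hr : (L ++ a :: b :: R).filter (fun x => decide (x ≠ 0)) =
              L.filter (fun x => decide (x ≠ 0)) ++ a :: b :: R.filter (fun x => decide (x ≠ 0)) := by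
            simp [ha, hb]
          rw [hr]
          exact key_right hac hb _ _

lemma sminus_key_left (p : ℝ) (hp : 0 ≤ p) (L R : List ℝ) (a b : ℝ) :
    signChanges ((L ++ (b + p * a) :: a :: R).filter (fun x => decide (x ≠ 0))) ≤
      signChanges ((L ++ b :: a :: R).filter (fun x => decide (x ≠ 0))) := by
  rw [← sc_reverse ((L ++ (b + p * a) :: a :: R).filter _),
      ← sc_reverse ((L ++ b :: a :: R).filter _)]
  rw [← List.filter_reverse, ← List.filter_reverse]
  have h1 : (L ++ (b + p * a) :: a :: R).reverse = R.reverse ++ a :: (b + p * a) :: L.reverse := by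
    simp
  have h2 : (L ++ b :: a :: R).reverse = R.reverse ++ a :: b :: L.reverse := by simp
  rw [h1, h2]
  exact sminus_key_right p hp R.reverse L.reverse a b



variable {n : ℕ}

lemma ofFn_update (f : Fin n → ℝ) (m : Fin n) (v : ℝ) :
    List.ofFn (Function.update f m v) = (List.ofFn f).set m v := by
  apply List.ext_getElem
  · simp
  · intro i h1 h2
    rw [List.getElem_ofFn, List.getElem_set]
    have hi : i < n := by simpa using h2
    rw [List.getElem_ofFn]
    simp only [Function.update_apply, Fin.ext_iff]
    by_cases him : (m : ℕ) = i
    · simp [him]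
    · simp [him, Ne.symm him]

/-- decomposition exposing positions `l` and `k = l+1`, with value `v` at `k`. -/
lemma ofFn_decomp_right (f : Fin n → ℝ) (k l : Fin n) (hkl : (k : ℕ) = (l : ℕ) + 1) (v : ℝ) :
    List.ofFn (Function.update f k v) =
      (List.ofFn f).take l ++ f l :: v :: (List.ofFn f).drop ((k : ℕ) + 1) := by
  rw [ofFn_update, List.set_eq_take_cons_drop v (by simpa using k.isLt)]
  have h1 : (List.ofFn f).take (k : ℕ) = (List.ofFn f).take l ++ [f l] := by
    rw [hkl, List.take_succ]
    congr 1
    rw [List.getElem?_eq_getElem (by simpa using l.isLt), List.getElem_ofFn]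
    simp
  rw [h1]
  simp

/-- decomposition with value `v` at `l`, exposing `f k` at `k = l+1`. -/
lemma ofFn_decomp_left (f : Fin n → ℝ) (k l : Fin n) (hkl : (k : ℕ) = (l : ℕ) + 1) (v : ℝ) :
    List.ofFn (Function.update f l v) =
      (List.ofFn f).take l ++ v :: f k :: (List.ofFn f).drop ((k : ℕ) + 1) := by
  rw [ofFn_update, List.set_eq_take_cons_drop v (by simpa using l.isLt)]
  have h1 : (List.ofFn f).drop ((l : ℕ) + 1) = f k :: (List.ofFn f).drop ((k : ℕ) + 1) := by
    rw [List.drop_eq_getElem_cons (show (l:ℕ)+1 < (List.ofFn f).length by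
      simp only [List.length_ofFn]; omega)]
    rw [List.getElem_ofFn]
    have h2 : (l:ℕ)+1+1 = (k:ℕ)+1 := by omega
    rw [h2]
    congr 1
    congr 1
    apply Fin.ext
    simp [hkl]
  rw [h1]

lemma ofFn_self_decomp (f : Fin n → ℝ) (k l : Fin n) (hkl : (k : ℕ) = (l : ℕ) + 1) :
    List.ofFn f =
      (List.ofFn f).take l ++ f l :: f k :: (List.ofFn f).drop ((k : ℕ) + 1) := by
  have := ofFn_decomp_right f k l hkl (f k)
  rwa [Function.update_eq_self] at this

lemma mulVec_bidiag (p : ℝ) (u v : Fin n) (x : Fin n → ℝ) :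
    ((1 : Matrix (Fin n) (Fin n) ℝ) + p • Matrix.single u v 1).mulVec x =
      Function.update x u (x u + p * x v) := by
  rw [Matrix.add_mulVec, Matrix.one_mulVec, Matrix.smul_mulVec,
    Matrix.single_mulVec]
  funext i
  by_cases hi : i = u
  · subst hi
    simp [Function.update_self]
  · simp [Function.update_of_ne hi, hi]


end SC

/-- An elementary bidiagonal matrix `A = I + p E_{i,i-1}` or
`A = I + p E_{i-1,i}` with `p ≥ 0` satisfies `s^-(Ax) ≤ s^-(x)` and
`s^+(Ax) ≤ s^+(x)` for every `x ∈ ℝ^n`. Here `k, l` are the (0-indexed) indices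
with `k = l + 1`, so `(k, l)` runs over the subdiagonal positions
`(i, i-1)`, `i ∈ {2,…,n}` (1-indexed). -/
theorem stmt0 {n : ℕ} (hn : 2 ≤ n) (p : ℝ) (hp : 0 ≤ p) (k l : Fin n)
    (hkl : (k : ℕ) = (l : ℕ) + 1)
    (A : Matrix (Fin n) (Fin n) ℝ)
    (hA : A = 1 + p • Matrix.single k l 1 ∨
          A = 1 + p • Matrix.single l k 1)
    (x : Fin n → ℝ) :
    sMinus (A.mulVec x) ≤ sMinus x ∧ sPlus (A.mulVec x) ≤ sPlus x := by
  have hlk : l ≠ k := by intro h; rw [h] at hkl; omega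
  have hkl' : k ≠ l := Ne.symm hlk
  rcases hA with hA1 | hA2
  -- ============ CASE 1 : A = 1 + p E_{k,l}, k = l+1 ============
  · rw [hA1, SC.mulVec_bidiag p k l x]
    by_cases hxl : x l = 0
    · have he : Function.update x k (x k + p * x l) = x := by
        rw [hxl, mul_zero, add_zero, Function.update_eq_self]
      rw [he]
      exact ⟨le_refl _, le_refl _⟩
    constructor
    · -- sMinus
      unfold sMinus
      rw [SC.ofFn_decomp_right x k l hkl (x k + p * x l)]
      conv_rhs => rw [SC.ofFn_self_decomp x k l hkl]
      exact SC.sminus_key_right p hp _ _ (x l) (x k)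
    · -- sPlus
      unfold sPlus
      apply Finset.sup_le
      intro ε _
      set y := Function.update x k (x k + p * x l) with hy
      set f : Fin n → ℝ := fun i => if x i = 0 then (if ε i then (1:ℝ) else -1) else x i with hf
      set z : ℝ := if y k = 0 then (if ε k then (1:ℝ) else -1) else y k with hz
      have hyk : y k = x k + p * x l := Function.update_self _ _ _
      have hfun : (fun i => if y i = 0 then (if ε i then (1:ℝ) else -1) else y i)
          = Function.update f k z := by
        funext i
        by_cases hi : i = k
        · subst hi; rw [Function.update_self]
        · rw [Function.update_of_ne hi]
          have hxy : y i = x i := Function.update_of_ne hi _ _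
          rw [hf, hxy]
      rw [hfun]
      have hzne : z ≠ 0 := by
        rw [hz]; split
        · split <;> norm_num
        · assumption
      have hfl : f l = x l := by rw [hf]; simp [hxl]
      have hflne : f l ≠ 0 := by rw [hfl]; exact hxl
      obtain ⟨c, hcw⟩ : ∃ c : Bool,
          signChanges (List.ofFn (Function.update f k z)) ≤
            signChanges (List.ofFn (Function.update f k
              (if x k = 0 then (if c then (1:ℝ) else -1) else x k))) := by
        by_cases hxk : x k = 0
        · refine ⟨decide (0 < z), ?_⟩
          rw [if_pos hxk]
          rw [SC.ofFn_decomp_right f k l hkl z,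
              SC.ofFn_decomp_right f k l hkl (if decide (0 < z) = true then (1:ℝ) else -1)]
          have hzw : 0 < z * (if decide (0 < z) = true then (1:ℝ) else -1) := by
            by_cases h : 0 < z
            · simpa [h] using h
            · have h' : z < 0 := lt_of_le_of_ne (not_lt.1 h) hzne
              have he : z * (if decide (0 < z) = true then (1:ℝ) else -1) = -z := by
                simp [h]
              rw [he]
              linarith
          have := (SC.mid_swap hzw ((List.ofFn f).take l ++ [f l])
            ((List.ofFn f).drop ((k:ℕ)+1))).le
          simpa using this
        · by_cases hzk : 0 < z * x k
          · refine ⟨true, ?_⟩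
            rw [if_neg hxk]
            rw [SC.ofFn_decomp_right f k l hkl z, SC.ofFn_decomp_right f k l hkl (x k)]
            have := (SC.mid_swap hzk ((List.ofFn f).take l ++ [f l])
              ((List.ofFn f).drop ((k:ℕ)+1))).le
            simpa using this
          · refine ⟨true, ?_⟩
            rw [if_neg hxk]
            rw [SC.ofFn_decomp_right f k l hkl z, SC.ofFn_decomp_right f k l hkl (x k)]
            have hzxk : z * x k ≤ 0 := not_lt.1 hzk
            have hdz : 0 < f l * z := by
              rw [hfl]
              by_cases hyk0 : y k = 0
              · have hv : x k + p * x l = 0 := by rw [← hyk, hyk0]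
                have hzk' : z * x k < 0 :=
                  lt_of_le_of_ne hzxk (mul_ne_zero hzne hxk)
                by_contra hcon
                have h' : x l * z ≤ 0 := not_lt.1 hcon
                have h0 : (x k + p * x l) * z = 0 := by rw [hv]; ring
                nlinarith [mul_nonneg hp (neg_nonneg.2 h'), h0]
              · have hz' : z = x k + p * x l := by rw [hz, if_neg hyk0, hyk]
                have hzz : 0 < z * z := mul_self_pos.2 hzne
                by_contra hcon
                have h' : x l * z ≤ 0 := not_lt.1 hcon
                have h0 : z * z = (x k + p * x l) * z := by rw [← hz']
                nlinarith [mul_nonneg hp (neg_nonneg.2 h'), h0]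
            exact SC.key_right hdz hxk _ _
      refine le_trans hcw ?_
      have hfin : (fun i => if x i = 0 then
            (if (Function.update ε k c) i then (1:ℝ) else -1) else x i)
          = Function.update f k (if x k = 0 then (if c then (1:ℝ) else -1) else x k) := by
        funext i
        by_cases hi : i = k
        · subst hi; rw [Function.update_self, Function.update_self]
        · rw [Function.update_of_ne hi, Function.update_of_ne hi, hf]
      exact le_trans
        (le_of_eq (congrArg signChanges (congrArg List.ofFn hfin.symm)))
        (Finset.le_sup (f := fun ε' : Fin n → Bool =>
            signChanges (List.ofFn fun i => if x i = 0 then (if ε' i then (1:ℝ) else -1) else x i))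
          (Finset.mem_univ (Function.update ε k c)))
  -- ============ CASE 2 : A = 1 + p E_{l,k}, k = l+1 ============
  · rw [hA2, SC.mulVec_bidiag p l k x]
    by_cases hxk : x k = 0
    · have he : Function.update x l (x l + p * x k) = x := by
        rw [hxk, mul_zero, add_zero, Function.update_eq_self]
      rw [he]
      exact ⟨le_refl _, le_refl _⟩
    constructor
    · -- sMinus
      unfold sMinus
      rw [SC.ofFn_decomp_left x k l hkl (x l + p * x k)]
      conv_rhs => rw [SC.ofFn_self_decomp x k l hkl]
      exact SC.sminus_key_left p hp _ _ (x k) (x l)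
    · -- sPlus
      unfold sPlus
      apply Finset.sup_le
      intro ε _
      set y := Function.update x l (x l + p * x k) with hy
      set f : Fin n → ℝ := fun i => if x i = 0 then (if ε i then (1:ℝ) else -1) else x i with hf
      set z : ℝ := if y l = 0 then (if ε l then (1:ℝ) else -1) else y l with hz
      have hyl : y l = x l + p * x k := Function.update_self _ _ _
      have hfun : (fun i => if y i = 0 then (if ε i then (1:ℝ) else -1) else y i)
          = Function.update f l z := by
        funext i
        by_cases hi : i = l
        · subst hi; rw [Function.update_self]
        · rw [Function.update_of_ne hi]
          have hxy : y i = x i := Function.update_of_ne hi _ _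
          rw [hf, hxy]
      rw [hfun]
      have hzne : z ≠ 0 := by
        rw [hz]; split
        · split <;> norm_num
        · assumption
      have hfk : f k = x k := by rw [hf]; simp [hxk]
      obtain ⟨c, hcw⟩ : ∃ c : Bool,
          signChanges (List.ofFn (Function.update f l z)) ≤
            signChanges (List.ofFn (Function.update f l
              (if x l = 0 then (if c then (1:ℝ) else -1) else x l))) := by
        by_cases hxl : x l = 0
        · refine ⟨decide (0 < z), ?_⟩
          rw [if_pos hxl]
          rw [SC.ofFn_decomp_left f k l hkl z,
              SC.ofFn_decomp_left f k l hkl (if decide (0 < z) = true then (1:ℝ) else -1)]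
          have hzw : 0 < z * (if decide (0 < z) = true then (1:ℝ) else -1) := by
            by_cases h : 0 < z
            · simpa [h] using h
            · have h' : z < 0 := lt_of_le_of_ne (not_lt.1 h) hzne
              have he : z * (if decide (0 < z) = true then (1:ℝ) else -1) = -z := by
                simp [h]
              rw [he]
              linarith
          exact (SC.mid_swap hzw ((List.ofFn f).take l)
            (f k :: (List.ofFn f).drop ((k:ℕ)+1))).le
        · by_cases hzl : 0 < z * x l
          · refine ⟨true, ?_⟩
            rw [if_neg hxl]
            rw [SC.ofFn_decomp_left f k l hkl z, SC.ofFn_decomp_left f k l hkl (x l)]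
            exact (SC.mid_swap hzl ((List.ofFn f).take l)
              (f k :: (List.ofFn f).drop ((k:ℕ)+1))).le
          · refine ⟨true, ?_⟩
            rw [if_neg hxl]
            rw [SC.ofFn_decomp_left f k l hkl z, SC.ofFn_decomp_left f k l hkl (x l)]
            have hzxl : z * x l ≤ 0 := not_lt.1 hzl
            have hdz : 0 < f k * z := by
              rw [hfk]
              by_cases hyl0 : y l = 0
              · have hv : x l + p * x k = 0 := by rw [← hyl, hyl0]
                have hzl' : z * x l < 0 :=
                  lt_of_le_of_ne hzxl (mul_ne_zero hzne hxl)
                by_contra hcon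
                have h' : x k * z ≤ 0 := not_lt.1 hcon
                have h0 : (x l + p * x k) * z = 0 := by rw [hv]; ring
                nlinarith [mul_nonneg hp (neg_nonneg.2 h'), h0]
              · have hz' : z = x l + p * x k := by rw [hz, if_neg hyl0, hyl]
                have hzz : 0 < z * z := mul_self_pos.2 hzne
                by_contra hcon
                have h' : x k * z ≤ 0 := not_lt.1 hcon
                have h0 : z * z = (x l + p * x k) * z := by rw [← hz']
                nlinarith [mul_nonneg hp (neg_nonneg.2 h'), h0]
            exact SC.key_left hdz hxl _ _
      refine le_trans hcw ?_
      have hfin : (fun i => if x i = 0 then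
            (if (Function.update ε l c) i then (1:ℝ) else -1) else x i)
          = Function.update f l (if x l = 0 then (if c then (1:ℝ) else -1) else x l) := by
        funext i
        by_cases hi : i = l
        · subst hi; rw [Function.update_self, Function.update_self]
        · rw [Function.update_of_ne hi, Function.update_of_ne hi, hf]
      exact le_trans
        (le_of_eq (congrArg signChanges (congrArg List.ofFn hfin.symm)))
        (Finset.le_sup (f := fun ε' : Fin n → Bool =>
            signChanges (List.ofFn fun i => if x i = 0 then (if ε' i then (1:ℝ) else -1) else x i))
          (Finset.mem_univ (Function.update ε l c)))

end
end

section
/- Let 1 ≤ m < n, let u^1,…,u^m ∈ ℝ^n, and let U ∈ ℝ^{n×m} be the matrix with columns u^1,…,u^m. The following two conditions are equivalent: (1) for every choice of scalars c_1,…,c_m ∈ ℝ, not all zero, s^+(Σ_{k=1}^m c_k u^k) ≤ m − 1; (2) all minors of order m of U, i.e. all determinants of the m×m submatrices of U obtained by selecting rows i_1 < … < i_m (and all m columns), are nonzero and have the same sign. -/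
open Matrix MeasureTheory Set Polynomial Filter

noncomputable section

set_option maxHeartbeats 1000000

lemma sc_le_cons (b : ℝ) (t : List ℝ) : signChanges t ≤ signChanges (b :: t) := by
  cases t with
  | nil => simp [signChanges]
  | cons c t' => simp [signChanges]

lemma sc_cons_le (a b : ℝ) (t : List ℝ) (hb : b ≠ 0) :
    signChanges (a :: t) ≤ signChanges (a :: b :: t) := by
  cases t with
  | nil => simp [signChanges]
  | cons c t' =>
    show (if a * c < 0 then 1 else 0) + signChanges (c :: t') ≤
      (if a * b < 0 then 1 else 0) + ((if b * c < 0 then 1 else 0) + signChanges (c :: t'))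
    have : (if a * c < 0 then 1 else 0) ≤
        (if a * b < 0 then 1 else 0) + (if b * c < 0 then 1 else 0) := by
      by_cases h : a * c < 0
      · simp only [h, if_true]
        by_cases h1 : a * b < 0
        · simp [h1]
        · have h2 : b * c < 0 := by
            rcases (mul_neg_iff.mp h) with ⟨ha, hc⟩ | ⟨ha, hc⟩ <;>
            rcases hb.lt_or_gt with hbn | hbp <;> nlinarith
          simp [h2]
      · simp [h]
    omega

lemma sc_sublist_aux : ∀ {t₁ t₂ : List ℝ}, List.Sublist t₁ t₂ → (∀ x ∈ t₂, x ≠ 0) →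
    signChanges t₁ ≤ signChanges t₂ ∧ ∀ a : ℝ, signChanges (a :: t₁) ≤ signChanges (a :: t₂) := by
  intro t₁ t₂ h
  induction h with
  | slnil => exact fun _ => ⟨le_refl _, fun a => le_refl _⟩
  | cons b h ih =>
    intro hnz
    have hb : b ≠ 0 := hnz b (List.mem_cons_self)
    have ih' := ih (fun x hx => hnz x (List.mem_cons_of_mem _ hx))
    constructor
    · exact le_trans ih'.1 (sc_le_cons _ _)
    · intro a
      exact le_trans (ih'.2 a) (sc_cons_le a b _ hb)
  | cons_cons a h ih =>
    intro hnz
    have ih' := ih (fun x hx => hnz x (List.mem_cons_of_mem _ hx))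
    refine ⟨ih'.2 a, fun a' => ?_⟩
    show (if a' * a < 0 then 1 else 0) + signChanges (a :: _) ≤
      (if a' * a < 0 then 1 else 0) + signChanges (a :: _)
    exact Nat.add_le_add_left (ih'.2 a) _

lemma sc_sublist {t₁ t₂ : List ℝ} (h : List.Sublist t₁ t₂) (hnz : ∀ x ∈ t₂, x ≠ 0) :
    signChanges t₁ ≤ signChanges t₂ := (sc_sublist_aux h hnz).1

lemma sc_chain : ∀ l : List ℝ, l.Chain' (fun a b => a * b < 0) →
    l.length ≤ signChanges l + 1
  | [] => by simp
  | [_] => by simp [signChanges]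
  | a :: b :: l => by
    intro h
    rw [List.Chain', List.isChain_cons_cons] at h
    have := sc_chain (b :: l) h.2
    show (b :: l).length + 1 ≤ (if a * b < 0 then 1 else 0) + signChanges (b :: l) + 1
    simp only [h.1, if_true]
    omega

lemma sc_extract : ∀ (t : List ℝ) (a : ℝ), a ≠ 0 → (∀ x ∈ t, x ≠ 0) →
    ∃ t' : List ℝ, List.Sublist (a :: t') (a :: t) ∧
      (a :: t').Chain' (fun x y => x * y < 0) ∧
      signChanges (a :: t) + 1 ≤ (a :: t').length
  | [] => by
    intro a _ _
    exact ⟨[], List.Sublist.refl _, List.isChain_singleton _, by simp [signChanges]⟩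
  | b :: t => by
    intro a ha hnz
    have hb : b ≠ 0 := hnz b (List.mem_cons_self)
    obtain ⟨t'', hsub, hchain, hlen⟩ :=
      sc_extract t b hb (fun x hx => hnz x (List.mem_cons_of_mem _ hx))
    by_cases hab : a * b < 0
    · refine ⟨b :: t'', List.cons_sublist_cons.mpr hsub, ?_, ?_⟩
      · exact List.isChain_cons_cons.mpr ⟨hab, hchain⟩
      · show (if a * b < 0 then 1 else 0) + signChanges (b :: t) + 1 ≤ (b :: t'').length + 1
        simp only [hab, if_true]
        omega
    · refine ⟨t'', List.cons_sublist_cons.mpr (List.sublist_of_cons_sublist hsub), ?_, ?_⟩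
      · cases t'' with
        | nil => exact List.isChain_singleton _
        | cons c t₃ =>
          rw [List.Chain', List.isChain_cons_cons] at hchain ⊢
          refine ⟨?_, hchain.2⟩
          have hbc : b * c < 0 := hchain.1
          have h1 : ¬ a * b < 0 := hab
          have hc : c ≠ 0 := by intro h; rw [h, mul_zero] at hbc; exact lt_irrefl _ hbc
          rcases ha.lt_or_gt with h2 | h2 <;> rcases hb.lt_or_gt with h3 | h3 <;> nlinarith
      · have he : signChanges (a :: b :: t) = signChanges (b :: t) := by
          simp [signChanges, hab]
        rw [he]
        simp only [List.length_cons] at hlen ⊢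
        omega

lemma ofFn_comp_sublist {n p : ℕ} (z : Fin n → ℝ) (idx : Fin p → Fin n) (h : StrictMono idx) :
    List.Sublist (List.ofFn (fun j => z (idx j))) (List.ofFn z) := by
  rw [List.sublist_iff_exists_fin_orderEmbedding_get_eq]
  have hmono : StrictMono (fun i : Fin (List.ofFn (fun j => z (idx j))).length =>
      (Fin.cast (List.length_ofFn (f := z)).symm (idx (Fin.cast List.length_ofFn i)))) := by
    intro a b hab
    exact Fin.lt_def.mpr (h (Fin.lt_def.mpr (Fin.lt_def.mp hab)))
  refine ⟨OrderEmbedding.ofStrictMono _ hmono, fun ix => ?_⟩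
  rw [List.get_ofFn, List.get_ofFn]
  rfl

lemma sc_ge_of_alt {n p : ℕ} (z : Fin n → ℝ) (hz : ∀ i, z i ≠ 0)
    (idx : Fin (p+1) → Fin n) (hidx : StrictMono idx)
    (halt : ∀ j : ℕ, (hj : j + 1 < p + 1) →
      z (idx ⟨j, by omega⟩) * z (idx ⟨j+1, hj⟩) < 0) :
    p ≤ signChanges (List.ofFn z) := by
  have hsub := ofFn_comp_sublist z idx hidx
  have hch : (List.ofFn (fun j => z (idx j))).Chain' (fun a b => a * b < 0) := by
    rw [List.Chain', List.isChain_iff_getElem]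
    intro i hi
    simp only [List.length_ofFn] at hi
    simp only [List.getElem_ofFn]
    exact halt i (by omega)
  have h1 := sc_chain _ hch
  have h2 := sc_sublist hsub (by
    intro x hx
    rw [List.mem_ofFn] at hx
    obtain ⟨i, rfl⟩ := hx
    exact hz i)
  simp only [List.length_ofFn] at h1
  omega

lemma exists_alt_idx {n : ℕ} (z : Fin n → ℝ) (hz : ∀ i, z i ≠ 0) (p : ℕ) (hn : 0 < n)
    (hp : p ≤ signChanges (List.ofFn z)) :
    ∃ idx : Fin (p+1) → Fin n, StrictMono idx ∧
      ∀ j : ℕ, (hj : j + 1 < p + 1) →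
        z (idx ⟨j, by omega⟩) * z (idx ⟨j+1, hj⟩) < 0 := by
  obtain ⟨n', rfl⟩ : ∃ n', n = n' + 1 := ⟨n - 1, by omega⟩
  have hofn : List.ofFn z = z 0 :: List.ofFn (fun i => z (Fin.succ i)) := List.ofFn_succ (f := z)
  obtain ⟨t', hsub, hch, hlen⟩ := sc_extract (List.ofFn (fun i => z (Fin.succ i))) (z 0)
    (hz 0) (by
      intro x hx
      rw [List.mem_ofFn] at hx
      obtain ⟨i, rfl⟩ := hx
      exact hz _)
  set l' : List ℝ := z 0 :: t' with hl'
  have hsub2 : List.Sublist l' (List.ofFn z) := by rw [hofn]; exact hsub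
  -- truncate to length p+1
  have hlen2 : p + 1 ≤ l'.length := by rw [hofn] at hp; omega
  set l'' := l'.take (p+1) with hl''
  have hlen3 : l''.length = p + 1 := by
    simp [hl'', List.length_take]
    omega
  have hsub3 : List.Sublist l'' (List.ofFn z) := (List.take_sublist _ _).trans hsub2
  have hch3 : l''.Chain' (fun x y => x * y < 0) := hch.take _
  obtain ⟨f, hf⟩ := List.sublist_iff_exists_fin_orderEmbedding_get_eq.mp hsub3
  refine ⟨fun j => Fin.cast (List.length_ofFn (f := z)) (f (Fin.cast hlen3.symm j)), ?_, ?_⟩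
  · intro a b hab
    exact Fin.lt_def.mpr (f.strictMono (Fin.lt_def.mpr (Fin.lt_def.mp hab)))
  · intro j hj
    have := List.isChain_iff_getElem.mp hch3 j (by omega)
    have e1 : ∀ (i : ℕ) (hi : i < l''.length), l''[i] =
        z (Fin.cast (List.length_ofFn (f := z)) (f ⟨i, hi⟩)) := by
      intro i hi
      have := hf ⟨i, hi⟩
      rw [List.get_ofFn] at this
      exact this
    rw [e1, e1] at this
    exact this

lemma sPlus_ge {n p : ℕ} (y : Fin n → ℝ) (idx : Fin (p+1) → Fin n) (hidx : StrictMono idx)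
    (s : ℝ) (hs : s = 1 ∨ s = -1)
    (hpat : ∀ j : Fin (p+1), y (idx j) = 0 ∨ 0 < (-1)^(j:ℕ) * s * y (idx j)) :
    p ≤ sPlus y := by
  classical
  set ε : Fin n → Bool := fun i => decide (∃ j, idx j = i ∧ (-1:ℝ)^(j:ℕ) * s = 1) with hε
  set z : Fin n → ℝ := fun i => if y i = 0 then (if ε i then (1:ℝ) else -1) else y i with hzdef
  have hz : ∀ i, z i ≠ 0 := by
    intro i
    simp only [hzdef]
    split
    · split <;> norm_num
    · assumption
  have hkey : ∀ j : Fin (p+1), 0 < (-1:ℝ)^(j:ℕ) * s * z (idx j) := by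
    intro j
    rcases hpat j with h0 | hpos
    · have h1 : (-1:ℝ)^(j:ℕ) * s = 1 ∨ (-1:ℝ)^(j:ℕ) * s = -1 := by
        rcases neg_one_pow_eq_or ℝ (j:ℕ) with h | h <;> rcases hs with rfl | rfl <;>
          simp [h]
      have hzj : z (idx j) = if ε (idx j) then (1:ℝ) else -1 := by
        simp only [hzdef, h0, if_true]
      have hεj : ε (idx j) = decide ((-1:ℝ)^(j:ℕ) * s = 1) := by
        simp only [hε, decide_eq_decide]
        constructor
        · rintro ⟨j', hj', he⟩
          rwa [hidx.injective hj'] at he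
        · intro he
          exact ⟨j, rfl, he⟩
      rcases h1 with h | h
      · rw [hzj, hεj, h]
        norm_num
      · rw [hzj, hεj, h]
        norm_num
    · have : z (idx j) = y (idx j) := by
        simp only [hzdef]
        split
        · rename_i hh
          rw [hh, mul_zero] at hpos
          exact absurd hpos (lt_irrefl 0)
        · rfl
      rwa [this]
  have halt : ∀ j : ℕ, (hj : j + 1 < p + 1) →
      z (idx ⟨j, by omega⟩) * z (idx ⟨j+1, hj⟩) < 0 := by
    intro j hj
    have hA := hkey ⟨j, by omega⟩
    have hB := hkey ⟨j+1, hj⟩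
    simp only at hA hB
    have hps : (-1:ℝ)^(j+1) = -((-1:ℝ)^j) := by ring
    rw [hps] at hB
    rcases neg_one_pow_eq_or ℝ j with h | h <;> rcases hs with rfl | rfl <;>
      rw [h] at hA hB <;> nlinarith
  have hsc := sc_ge_of_alt z hz idx hidx halt
  refine le_trans hsc ?_
  rw [sPlus]
  exact Finset.le_sup (f := fun ε : Fin n → Bool =>
    signChanges (List.ofFn fun i => if y i = 0 then (if ε i then (1:ℝ) else -1) else y i))
    (Finset.mem_univ ε)

lemma sPlus_extract {n m : ℕ} (hn : 0 < n) (hm : 1 ≤ m) (y : Fin n → ℝ)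
    (h : ¬ sPlus y ≤ m - 1) :
    ∃ idx : Fin (m+1) → Fin n, StrictMono idx ∧ ∃ s : ℝ, (s = 1 ∨ s = -1) ∧
      ∀ j : Fin (m+1), y (idx j) = 0 ∨ 0 < (-1:ℝ)^(j:ℕ) * s * y (idx j) := by
  classical
  rw [sPlus, Finset.sup_le_iff] at h
  push_neg at h
  obtain ⟨ε, _, hε⟩ := h
  set z : Fin n → ℝ := fun i => if y i = 0 then (if ε i then (1:ℝ) else -1) else y i with hzdef
  have hz : ∀ i, z i ≠ 0 := by
    intro i
    simp only [hzdef]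
    split
    · split <;> norm_num
    · assumption
  have hsc : m ≤ signChanges (List.ofFn z) := by omega
  obtain ⟨idx, hidx, halt⟩ := exists_alt_idx z hz m hn hsc
  set s : ℝ := if 0 < z (idx 0) then 1 else -1 with hsdef
  have hs : s = 1 ∨ s = -1 := by
    rw [hsdef]; split <;> simp
  refine ⟨idx, hidx, s, hs, ?_⟩
  have hkey : ∀ j : ℕ, (hj : j < m + 1) → 0 < (-1:ℝ)^j * s * z (idx ⟨j, hj⟩) := by
    intro j
    induction j with
    | zero =>
      intro hj
      rcases (hz (idx 0)).lt_or_gt with hlt | hlt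
      · have : s = -1 := by rw [hsdef, if_neg (by linarith)]
        rw [this]
        simpa using by nlinarith
      · have : s = 1 := by rw [hsdef, if_pos hlt]
        rw [this]
        simpa using hlt
    | succ j ih =>
      intro hj
      have hprev := ih (by omega)
      have hAB := halt j hj
      have hps : (-1:ℝ)^(j+1) = -((-1:ℝ)^j) := by ring
      rw [hps]
      rcases neg_one_pow_eq_or ℝ j with h | h <;> rcases hs with h2 | h2 <;>
        rw [h, h2] at hprev ⊢ <;> nlinarith
  intro j
  by_cases h0 : y (idx j) = 0
  · exact Or.inl h0
  · right
    have hzy : z (idx j) = y (idx j) := by simp only [hzdef, h0, if_false]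
    have hk := hkey (j:ℕ) j.isLt
    have he : (⟨(j:ℕ), j.isLt⟩ : Fin (m+1)) = j := Fin.eta j j.isLt
    rw [he, hzy] at hk
    exact hk

lemma det_alt_identity {m : ℕ} (V : Matrix (Fin (m+1)) (Fin m) ℝ) (c : Fin m → ℝ) :
    ∑ p : Fin (m+1), (-1:ℝ)^(p:ℕ) * (V.submatrix p.succAbove id).det * V.mulVec c p = 0 := by
  classical
  set W : Matrix (Fin (m+1)) (Fin (m+1)) ℝ :=
    fun i => Fin.cons (V.mulVec c i) (fun j' => V i j') with hW
  have hdet : W.det = 0 := by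
    rw [← Matrix.exists_mulVec_eq_zero_iff]
    refine ⟨Fin.cons 1 (fun k => -c k), ?_, ?_⟩
    · intro h
      have := congrFun h 0
      simp at this
    · funext i
      simp only [Matrix.mulVec, dotProduct, Fin.sum_univ_succ, hW]
      simp [Matrix.mulVec, dotProduct, mul_comm]
  have hexp := Matrix.det_succ_column_zero W
  rw [hdet] at hexp
  have : ∀ p : Fin (m+1), (-1:ℝ)^(p:ℕ) * W p 0 * (W.submatrix p.succAbove Fin.succ).det
      = (-1:ℝ)^(p:ℕ) * (V.submatrix p.succAbove id).det * V.mulVec c p := by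
    intro p
    have h1 : W p 0 = V.mulVec c p := by simp [hW]
    have h2 : W.submatrix p.succAbove Fin.succ = V.submatrix p.succAbove id := by
      funext a b
      simp [hW, Matrix.submatrix]
    rw [h1, h2]
    ring
  rw [Finset.sum_congr rfl (fun p _ => this p)] at hexp
  exact hexp.symm

lemma strictMono_unique {m n : ℕ} (f g : Fin m → Fin n) (hf : StrictMono f) (hg : StrictMono g)
    (h : ∀ j, f j ∈ Finset.image g Finset.univ) : f = g := by
  classical
  have hcard : (Finset.image g Finset.univ).card = m := by
    rw [Finset.card_image_of_injective _ hg.injective, Finset.card_univ, Fintype.card_fin]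
  have h1 := Finset.orderEmbOfFin_unique hcard h hf
  have h2 := Finset.orderEmbOfFin_unique hcard
    (fun j => Finset.mem_image_of_mem g (Finset.mem_univ j)) hg
  rw [h1, ← h2]

lemma insert_row {n m : ℕ} (r : Fin m → Fin n) (hr : StrictMono r) (i : Fin n)
    (hi : ∀ j, r j ≠ i) :
    ∃ (w : Fin (m+1) → Fin n) (j₀ : Fin (m+1)), StrictMono w ∧ w j₀ = i ∧
      (fun q => w (j₀.succAbove q)) = r := by
  classical
  set s : Finset (Fin n) := insert i (Finset.image r Finset.univ) with hs
  have hcard : s.card = m + 1 := by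
    rw [hs, Finset.card_insert_of_notMem, Finset.card_image_of_injective _ hr.injective,
      Finset.card_univ, Fintype.card_fin]
    intro hmem
    obtain ⟨j, _, hj⟩ := Finset.mem_image.mp hmem
    exact hi j hj
  set w := s.orderEmbOfFin hcard with hw
  have hws : ∀ p, (w p : Fin n) ∈ s := fun p => Finset.orderEmbOfFin_mem s hcard p
  have hrange : i ∈ Set.range w := by
    rw [Finset.range_orderEmbOfFin]
    exact Finset.mem_insert_self _ _
  obtain ⟨j₀, hj₀⟩ := hrange
  have hwm : StrictMono w := (s.orderEmbOfFin hcard).strictMono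
  refine ⟨w, j₀, hwm, hj₀, ?_⟩
  apply strictMono_unique _ _ (hwm.comp (Fin.strictMono_succAbove j₀)) hr
  intro j
  have h1 : (w (j₀.succAbove j) : Fin n) ∈ s := hws _
  have h2 : w (j₀.succAbove j) ≠ i := by
    rw [← hj₀]
    intro h
    exact Fin.succAbove_ne j₀ j (hwm.injective h)
  rw [hs] at h1
  rcases Finset.mem_insert.mp h1 with h | h
  · exact absurd h h2
  · exact h

lemma submatrix_mulVec_eq {n m : ℕ} (U : Matrix (Fin n) (Fin m) ℝ) (r : Fin m → Fin n)
    (c : Fin m → ℝ) (j : Fin m) :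
    (U.submatrix r id).mulVec c j = U.mulVec c (r j) := rfl

lemma minors_ne {n m : ℕ} (hm : 1 ≤ m) (hmn : m < n) (U : Matrix (Fin n) (Fin m) ℝ)
    (H : ∀ c : Fin m → ℝ, c ≠ 0 → sPlus (U.mulVec c) ≤ m - 1)
    (r : Fin m → Fin n) (hr : StrictMono r) : (U.submatrix r id).det ≠ 0 := by
  classical
  intro hdet
  obtain ⟨c, hc, hMc⟩ := Matrix.exists_mulVec_eq_zero_iff.mpr hdet
  -- find i outside the range of r
  have hne : Finset.image r Finset.univ ≠ Finset.univ := by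
    intro h
    have := Finset.card_image_le (s := (Finset.univ : Finset (Fin m))) (f := r)
    rw [h, Finset.card_univ, Finset.card_univ, Fintype.card_fin, Fintype.card_fin] at this
    omega
  have hex : ∃ i, i ∉ Finset.image r Finset.univ := by
    by_contra h
    push_neg at h
    exact hne (Finset.eq_univ_iff_forall.mpr h)
  obtain ⟨i, hi⟩ := hex
  have hir : ∀ j, r j ≠ i := fun j hj => hi (Finset.mem_image.mpr ⟨j, Finset.mem_univ j, hj⟩)
  obtain ⟨w, j₀, hw, hwj₀, hwr⟩ := insert_row r hr i hir
  set y := U.mulVec c with hy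
  have hzero : ∀ q, y (r q) = 0 := by
    intro q
    have h7 : (U.submatrix r id *ᵥ c) q = 0 := by rw [hMc]; rfl
    exact h7
  set s : ℝ := if 0 < (-1:ℝ)^(j₀:ℕ) * y i then 1 else -1 with hsdef
  have hs : s = 1 ∨ s = -1 := by rw [hsdef]; split <;> simp
  have hpat : ∀ j : Fin (m+1), y (w j) = 0 ∨ 0 < (-1:ℝ)^(j:ℕ) * s * y (w j) := by
    intro j
    by_cases hj : j = j₀
    · rw [hj, hwj₀]
      by_cases h0 : y i = 0
      · exact Or.inl h0
      · right
        rw [hsdef]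
        split
        · rename_i h1
          nlinarith
        · rename_i h1
          push_neg at h1
          rcases neg_one_pow_eq_or ℝ ((j₀:ℕ)) with h2 | h2 <;> rw [h2] at h1 ⊢ <;>
            rcases lt_or_gt_of_ne h0 with h3 | h3 <;> nlinarith
    · obtain ⟨q, hq⟩ := Fin.exists_succAbove_eq hj
      left
      rw [← hq]
      have h4 := congrFun hwr q
      rw [h4]
      exact hzero q
  have h5 := sPlus_ge y w hw s hs hpat
  have h6 := H c hc
  rw [← hy] at h6
  omega

lemma adjacent_sign {n m : ℕ} (hm : 1 ≤ m) (hmn : m < n) (U : Matrix (Fin n) (Fin m) ℝ)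
    (H : ∀ c : Fin m → ℝ, c ≠ 0 → sPlus (U.mulVec c) ≤ m - 1)
    (r r' : Fin m → Fin n) (hr : StrictMono r) (hr' : StrictMono r') (k : Fin m)
    (hdiff : ∀ j, j ≠ k → r' j = r j) (hk : (r' k : ℕ) = (r k : ℕ) + 1) :
    0 < (U.submatrix r id).det * (U.submatrix r' id).det := by
  classical
  set i : Fin n := r' k with hi
  have hir : ∀ j, r j ≠ i := by
    intro j hj
    rcases lt_trichotomy j k with h | h | h
    · have := hr h
      rw [hj] at this
      rw [Fin.lt_def, hk] at this
      have := hr.le_iff_le.mpr (le_of_lt h)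
      omega
    · rw [h] at hj
      rw [Fin.ext_iff] at hj
      omega
    · have h2 : r' k < r' j := hr' h
      rw [hdiff j (ne_of_gt h)] at h2
      rw [hj] at h2
      exact lt_irrefl _ h2
  obtain ⟨w, j₀, hw, hwj₀, hwr⟩ := insert_row r hr i hir
  set j₁ : Fin (m+1) := j₀.succAbove k with hj₁
  have hwj₁ : w j₁ = r k := congrFun hwr k
  -- j₀ = j₁ + 1
  have hlt : j₁ < j₀ := by
    have : w j₁ < w j₀ := by
      rw [hwj₁, hwj₀, Fin.lt_def]
      omega
    exact hw.lt_iff_lt.mp this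
  have hj01 : (j₀:ℕ) = (j₁:ℕ) + 1 := by
    by_contra hne
    have h1 : (j₁:ℕ) + 1 < (j₀:ℕ) := by
      rw [Fin.lt_def] at hlt
      omega
    have hb : (j₁:ℕ) + 1 < m + 1 := by
      have := j₀.isLt
      omega
    have h3 : w j₁ < w ⟨(j₁:ℕ)+1, hb⟩ := hw (Fin.lt_def.mpr (Nat.lt_succ_self _))
    have h4 : w ⟨(j₁:ℕ)+1, hb⟩ < w j₀ := hw (Fin.lt_def.mpr h1)
    rw [hwj₁] at h3
    rw [hwj₀] at h4
    rw [Fin.lt_def] at h3 h4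
    omega
  -- w ∘ j₁.succAbove = r'
  have hwr' : (fun q => w (j₁.succAbove q)) = r' := by
    apply strictMono_unique _ _ (hw.comp (Fin.strictMono_succAbove j₁)) hr'
    intro j
    show w (j₁.succAbove j) ∈ Finset.image r' Finset.univ
    have hne : j₁.succAbove j ≠ j₁ := Fin.succAbove_ne j₁ j
    have hmem : w (j₁.succAbove j) = i ∨ ∃ q, w (j₁.succAbove j) = r q := by
      by_cases h : j₁.succAbove j = j₀
      · left; rw [h, hwj₀]
      · right
        obtain ⟨q, hq⟩ := Fin.exists_succAbove_eq h
        exact ⟨q, by rw [← hq]; exact congrFun hwr q⟩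
    rcases hmem with h | ⟨q, hq⟩
    · rw [h, hi]
      exact Finset.mem_image_of_mem r' (Finset.mem_univ k)
    · have hqk : q ≠ k := by
        intro h
        rw [h, ← hwj₁] at hq
        exact hne (hw.injective hq)
      rw [hq, ← hdiff q hqk]
      exact Finset.mem_image_of_mem r' (Finset.mem_univ q)
  -- build c
  set M : Matrix (Fin m) (Fin m) ℝ := (U.submatrix r id).updateRow k 0 with hM
  have hMdet : M.det = 0 := Matrix.det_eq_zero_of_row_eq_zero k (by simp [hM])
  obtain ⟨c, hc, hMc⟩ := Matrix.exists_mulVec_eq_zero_iff.mpr hMdet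
  set y := U.mulVec c with hy
  have hyr : ∀ q : Fin m, q ≠ k → y (r q) = 0 := by
    intro q hq
    have h1 : (U.submatrix r id).mulVec c q = M.mulVec c q := by
      simp only [Matrix.mulVec, dotProduct, hM]
      congr 1
      funext j
      rw [Matrix.updateRow_ne hq]
    have h2 : M.mulVec c q = 0 := by rw [hMc]; rfl
    have h3 : (U.submatrix r id).mulVec c q = y (r q) := rfl
    rw [← h3, h1, h2]
  have hzero : ∀ p : Fin (m+1), p ≠ j₀ → p ≠ j₁ → y (w p) = 0 := by
    intro p hp0 hp1
    obtain ⟨q, hq⟩ := Fin.exists_succAbove_eq hp0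
    have hqk : q ≠ k := by
      intro h
      rw [h] at hq
      exact hp1 (hq ▸ rfl)
    rw [← hq]
    rw [congrFun hwr q]
    exact hyr q hqk
  have hdr : (U.submatrix r id).det ≠ 0 := minors_ne hm hmn U H r hr
  have hdr' : (U.submatrix r' id).det ≠ 0 := minors_ne hm hmn U H r' hr'
  have hne0 : y (w j₁) ≠ 0 := by
    intro h0
    apply hdr
    rw [← Matrix.exists_mulVec_eq_zero_iff]
    refine ⟨c, hc, ?_⟩
    funext q
    show y (r q) = 0
    by_cases hq : q = k
    · rw [hq, ← hwj₁]; exact h0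
    · exact hyr q hq
  have hne0' : y (w j₀) ≠ 0 := by
    intro h0
    apply hdr'
    rw [← Matrix.exists_mulVec_eq_zero_iff]
    refine ⟨c, hc, ?_⟩
    funext q
    show y (r' q) = 0
    rw [← congrFun hwr' q]
    by_cases hq : j₁.succAbove q = j₀
    · rw [hq]; exact h0
    · exact hzero _ hq (Fin.succAbove_ne j₁ q)
  -- the identity
  have hid := det_alt_identity (U.submatrix w id) c
  have hterm : ∀ p : Fin (m+1),
      (-1:ℝ)^(p:ℕ) * ((U.submatrix w id).submatrix p.succAbove id).det
        * (U.submatrix w id).mulVec c p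
      = (-1:ℝ)^(p:ℕ) * (U.submatrix (fun q => w (p.succAbove q)) id).det * y (w p) := by
    intro p
    have h2 : (U.submatrix w id).submatrix p.succAbove id
        = U.submatrix (fun q => w (p.succAbove q)) id := by
      rw [Matrix.submatrix_submatrix]
      rfl
    have h3 : (U.submatrix w id).mulVec c p = y (w p) := rfl
    rw [h2, h3]
  rw [Finset.sum_congr rfl (fun p _ => hterm p)] at hid
  have hsum := Finset.sum_eq_add_of_mem
    (f := fun p : Fin (m+1) =>
      (-1:ℝ)^(p:ℕ) * (U.submatrix (fun q => w (p.succAbove q)) id).det * y (w p))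
    j₁ j₀ (Finset.mem_univ _) (Finset.mem_univ _)
    (ne_of_lt hlt)
    (fun p _ hp => by
      show (-1:ℝ)^(p:ℕ) * (U.submatrix (fun q => w (p.succAbove q)) id).det * y (w p) = 0
      rw [hzero p hp.2 hp.1, mul_zero])
  rw [hsum] at hid
  have hid2 : (-1:ℝ)^(j₁:ℕ) * (U.submatrix r' id).det * y (w j₁)
      + (-1:ℝ)^(j₀:ℕ) * (U.submatrix r id).det * y (w j₀) = 0 := by
    rw [← hwr', ← hwr]
    exact hid
  clear hid
  -- hid : (-1)^j₁ * det r' * y(w j₁) + (-1)^j₀ * det r * y(w j₀) = 0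
  set A := (U.submatrix r id).det
  set B := (U.submatrix r' id).det
  have hsign : (-1:ℝ)^(j₀:ℕ) = -((-1:ℝ)^(j₁:ℕ)) := by
    rw [hj01, pow_succ]
    ring
  rw [hsign] at hid2
  have hBA : B * y (w j₁) = A * y (w j₀) := by
    rcases neg_one_pow_eq_or ℝ ((j₁:ℕ)) with h | h <;> rw [h] at hid2 <;> nlinarith [hid2]
  -- conclude
  rcases lt_trichotomy (A * B) 0 with hAB | hAB | hAB
  · exfalso
    have hyy : y (w j₁) * y (w j₀) < 0 := by
      rcases lt_or_gt_of_ne hdr with hA | hA <;> rcases lt_or_gt_of_ne hdr' with hB | hB <;>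
        rcases lt_or_gt_of_ne hne0 with h1 | h1 <;> rcases lt_or_gt_of_ne hne0' with h2 | h2 <;>
          nlinarith [hBA, hAB]
    set s : ℝ := if 0 < (-1:ℝ)^(j₁:ℕ) * y (w j₁) then 1 else -1 with hsdef
    have hs : s = 1 ∨ s = -1 := by rw [hsdef]; split <;> simp
    have hsj₁ : 0 < (-1:ℝ)^(j₁:ℕ) * s * y (w j₁) := by
      rw [hsdef]
      split
      · rename_i h1; nlinarith
      · rename_i h1
        push_neg at h1
        rcases neg_one_pow_eq_or ℝ ((j₁:ℕ)) with h2 | h2 <;> rw [h2] at h1 ⊢ <;>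
          rcases lt_or_gt_of_ne hne0 with h3 | h3 <;> nlinarith
    have hpat : ∀ j : Fin (m+1), y (w j) = 0 ∨ 0 < (-1:ℝ)^(j:ℕ) * s * y (w j) := by
      intro j
      by_cases hj0 : j = j₀
      · right
        rw [hj0, hj01, pow_succ]
        rcases neg_one_pow_eq_or ℝ ((j₁:ℕ)) with h2 | h2 <;> rw [h2] at hsj₁ ⊢ <;>
          rcases hs with h4 | h4 <;> rw [h4] at hsj₁ ⊢ <;> nlinarith
      · by_cases hj1 : j = j₁
        · right; rw [hj1]; exact hsj₁
        · exact Or.inl (hzero j hj0 hj1)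
    have h5 := sPlus_ge y w hw s hs hpat
    have h6 := H c hc
    rw [← hy] at h6
    omega
  · exfalso
    rcases mul_eq_zero.mp hAB with h | h
    · exact hdr h
    · exact hdr' h
  · exact hAB

lemma fin_le_apply {m n : ℕ} (r : Fin m → Fin n) (hr : StrictMono r) (j : Fin m) :
    (j:ℕ) ≤ (r j:ℕ) := by
  have key : ∀ jv : ℕ, ∀ h : jv < m, jv ≤ (r ⟨jv, h⟩ : ℕ) := by
    intro jv
    induction jv with
    | zero => intro h; exact Nat.zero_le _
    | succ jv ih =>
      intro h
      have h1 : jv < m := by omega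
      have h2 := ih h1
      have h3 : r ⟨jv, h1⟩ < r ⟨jv+1, h⟩ := hr (by rw [Fin.lt_def]; simp)
      rw [Fin.lt_def] at h3
      omega
  have := key (j:ℕ) j.isLt
  rwa [Fin.eta] at this


/-- For `1 ≤ m < n` and `U ∈ ℝ^{n×m}` with columns `u^1,…,u^m`, the
following are equivalent: (1) every nontrivial linear combination `c` of the columns
satisfies `s^+(Uc) ≤ m - 1`; (2) all minors of order `m` of `U` are nonzero and have
the same sign. -/
theorem stmt1 {n m : ℕ} (hm : 1 ≤ m) (hmn : m < n)
    (U : Matrix (Fin n) (Fin m) ℝ) :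
    (∀ c : Fin m → ℝ, c ≠ 0 → sPlus (U.mulVec c) ≤ m - 1) ↔
    (∃ ε : ℝ, (ε = 1 ∨ ε = -1) ∧
        ∀ r : Fin m → Fin n, StrictMono r →
          0 < ε * (U.submatrix r id).det) := by
  classical
  constructor
  · intro H
    set r₀ : Fin m → Fin n := fun j => ⟨(j:ℕ), by omega⟩ with hr₀def
    have hr₀ : StrictMono r₀ := by
      intro a b hab
      rw [Fin.lt_def]
      exact hab
    set D₀ := (U.submatrix r₀ id).det with hD₀
    set ε : ℝ := if 0 < D₀ then 1 else -1 with hεdef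
    have hε : ε = 1 ∨ ε = -1 := by rw [hεdef]; split <;> simp
    have hbase : 0 < ε * D₀ := by
      have hD := minors_ne hm hmn U H r₀ hr₀
      rw [hεdef]
      split
      · rename_i h; simpa using h
      · rename_i h
        push_neg at h
        have : D₀ < 0 := lt_of_le_of_ne h hD
        nlinarith
    have key : ∀ N : ℕ, ∀ r : Fin m → Fin n, StrictMono r → (∑ j, (r j:ℕ)) = N →
        0 < ε * (U.submatrix r id).det := by
      intro N
      induction N using Nat.strong_induction_on with
      | _ N ih =>
        intro r hr hN
        by_cases hb : ∀ j : Fin m, (r j : ℕ) = (j:ℕ)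
        · have : r = r₀ := funext fun j => Fin.ext (hb j)
          rw [this]
          exact hbase
        · push_neg at hb
          obtain ⟨j0, hj0⟩ := hb
          have hP : ∃ jv : ℕ, ∃ h : jv < m, (r ⟨jv, h⟩ : ℕ) ≠ jv :=
            ⟨(j0:ℕ), j0.isLt, by rwa [Fin.eta]⟩
          set k := Nat.find hP with hkdef
          obtain ⟨hkm, hkne⟩ := Nat.find_spec hP
          have hmin : ∀ jv : ℕ, jv < k → ∀ h : jv < m, (r ⟨jv, h⟩ : ℕ) = jv := by
            intro jv hjv h
            have := Nat.find_min hP hjv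
            push_neg at this
            exact this h
          set kf : Fin m := ⟨k, hkm⟩ with hkf
          have hge : k + 1 ≤ (r kf : ℕ) := by
            have := fin_le_apply r hr kf
            simp only [hkf] at this hkne ⊢
            omega
          have hpf : (r kf : ℕ) - 1 < n := by
            have := (r kf).isLt
            omega
          set v : Fin n := ⟨(r kf : ℕ) - 1, hpf⟩ with hv
          set r'' : Fin m → Fin n := Function.update r kf v with hr''def
          have hrk : r'' kf = v := Function.update_self kf v r
          have hrne : ∀ j, j ≠ kf → r'' j = r j := fun j hj => Function.update_of_ne hj v r
          have hvval : (v : ℕ) = (r kf : ℕ) - 1 := rfl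
          have hr'' : StrictMono r'' := by
            intro a b hab
            by_cases ha : a = kf
            · have hbk : b ≠ kf := by
                intro hbb
                rw [ha, hbb] at hab
                exact lt_irrefl _ hab
              rw [ha, hrk, hrne b hbk]
              have h5 : r kf < r b := hr (ha ▸ hab)
              rw [Fin.lt_def] at h5 ⊢
              omega
            · by_cases hbk : b = kf
              · rw [hrne a ha, hbk, hrk]
                have hak : (a : ℕ) < k := by
                  rw [hbk, hkf] at hab
                  rw [Fin.lt_def] at hab
                  exact hab
                have hra : (r a : ℕ) = (a : ℕ) := by
                  have := hmin (a : ℕ) hak a.isLt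
                  rwa [Fin.eta] at this
                rw [Fin.lt_def]
                rw [hvval, hra]
                omega
              · rw [hrne a ha, hrne b hbk]
                exact hr hab
          have hdiff : ∀ j, j ≠ kf → r j = r'' j := fun j hj => (hrne j hj).symm
          have hkcond : (r kf : ℕ) = (r'' kf : ℕ) + 1 := by
            rw [hrk, hvval]
            omega
          have hsum : (∑ j, (r'' j : ℕ)) < N := by
            rw [← hN]
            apply Finset.sum_lt_sum
            · intro j _
              by_cases hj : j = kf
              · rw [hj, hrk, hvval]
                omega
              · rw [hrne j hj]
            · refine ⟨kf, Finset.mem_univ kf, ?_⟩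
              rw [hrk, hvval]
              omega
          have ih' := ih _ hsum r'' hr'' rfl
          have hadj := adjacent_sign hm hmn U H r'' r hr'' hr kf hdiff hkcond
          rcases lt_or_gt_of_ne (minors_ne hm hmn U H r'' hr'') with hD | hD <;>
            rcases hε with he | he <;> rw [he] at ih' ⊢ <;> nlinarith [hadj, ih']
    exact ⟨ε, hε, fun r hr => key (∑ j, (r j : ℕ)) r hr rfl⟩
  · intro ⟨ε, hε, hpos⟩ c hc
    by_contra h
    have hn : 0 < n := by omega
    obtain ⟨idx, hidx, s, hs, hpat⟩ := sPlus_extract hn hm (U.mulVec c) h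
    set y := U.mulVec c with hy
    have hid := det_alt_identity (U.submatrix idx id) c
    have hterm : ∀ p : Fin (m+1),
        (-1:ℝ)^(p:ℕ) * ((U.submatrix idx id).submatrix p.succAbove id).det
          * (U.submatrix idx id).mulVec c p
        = (-1:ℝ)^(p:ℕ) * (U.submatrix (fun q => idx (p.succAbove q)) id).det * y (idx p) := by
      intro p
      have h2 : (U.submatrix idx id).submatrix p.succAbove id
          = U.submatrix (fun q => idx (p.succAbove q)) id := by
        rw [Matrix.submatrix_submatrix]
        rfl
      have h3 : (U.submatrix idx id).mulVec c p = y (idx p) := rfl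
      rw [h2, h3]
    rw [Finset.sum_congr rfl (fun p _ => hterm p)] at hid
    set g : Fin (m+1) → ℝ := fun p =>
      ε * (U.submatrix (fun q => idx (p.succAbove q)) id).det
        * ((-1:ℝ)^(p:ℕ) * s * y (idx p)) with hgdef
    have hgpos : ∀ p : Fin (m+1), 0 < ε * (U.submatrix (fun q => idx (p.succAbove q)) id).det := by
      intro p
      exact hpos _ (hidx.comp (Fin.strictMono_succAbove p))
    have hgnonneg : ∀ p ∈ Finset.univ, 0 ≤ g p := by
      intro p _
      show 0 ≤ ε * (U.submatrix (fun q => idx (p.succAbove q)) id).det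
        * ((-1:ℝ)^(p:ℕ) * s * y (idx p))
      rcases hpat p with h0 | h0
      · rw [h0, mul_zero, mul_zero]
      · exact le_of_lt (mul_pos (hgpos p) h0)
    have hgsum : ∑ p, g p = 0 := by
      have he : ∀ p : Fin (m+1), g p
          = (ε * s) * ((-1:ℝ)^(p:ℕ) * (U.submatrix (fun q => idx (p.succAbove q)) id).det
            * y (idx p)) := by
        intro p
        show ε * (U.submatrix (fun q => idx (p.succAbove q)) id).det
          * ((-1:ℝ)^(p:ℕ) * s * y (idx p)) = _
        ring
      rw [Finset.sum_congr rfl (fun p _ => he p), ← Finset.mul_sum, hid, mul_zero]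
    have hzero : ∀ p : Fin (m+1), y (idx p) = 0 := by
      intro p
      have := (Finset.sum_eq_zero_iff_of_nonneg hgnonneg).mp hgsum p (Finset.mem_univ p)
      have this2 : ε * (U.submatrix (fun q => idx (p.succAbove q)) id).det
          * ((-1:ℝ)^(p:ℕ) * s * y (idx p)) = 0 := this
      clear this
      rename' this2 => this
      rcases mul_eq_zero.mp this with h1 | h1
      · exact absurd h1 (ne_of_gt (hgpos p))
      · rcases mul_eq_zero.mp h1 with h2 | h2
        · exfalso
          rcases neg_one_pow_eq_or ℝ ((p:ℕ)) with h3 | h3 <;> rcases hs with h4 | h4 <;>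
            rw [h3, h4] at h2 <;> norm_num at h2
        · exact h2
    -- contradiction with invertibility of a minor
    have hlast : StrictMono (fun q => idx ((Fin.last m).succAbove q)) :=
      hidx.comp (Fin.strictMono_succAbove (Fin.last m))
    have hdet := hpos _ hlast
    have hmv : (U.submatrix (fun q => idx ((Fin.last m).succAbove q)) id).mulVec c = 0 := by
      funext q
      show y (idx ((Fin.last m).succAbove q)) = 0
      exact hzero _
    have : (U.submatrix (fun q => idx ((Fin.last m).succAbove q)) id).det = 0 :=
      Matrix.exists_mulVec_eq_zero_iff.mp ⟨c, hc, hmv⟩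
    rw [this, mul_zero] at hdet
    exact lt_irrefl _ hdet

end
end

section
/- Let A : (a,b) → ℝ^{n×n} be measurable and locally essentially bounded, and for a < t0 < b let Φ(·,t0) be the transition matrix of ż = A(t)z. Suppose Φ(t,t0) is totally positive (TP) for all a < t0 < t < b. Let z be a nontrivial solution, i.e. z(t) = Φ(t,t0)z0 for some z0 ≠ 0. Then s^+(z(t)) ≤ s^-(z(t0)) for all a < t0 < t < b; consequently both t ↦ s^-(z(t)) and t ↦ s^+(z(t)) are nonincreasing functions of t on (a,b). -/
open Matrix MeasureTheory Set Polynomial Filter List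

set_option maxHeartbeats 1000000

noncomputable section

lemma signChanges_cons_cons (a b : ℝ) (l : List ℝ) :
    signChanges (a :: b :: l) = (if a * b < 0 then 1 else 0) + signChanges (b :: l) := by
  simp [signChanges]

lemma signChanges_nil : signChanges [] = 0 := by simp [signChanges]

lemma signChanges_singleton (a : ℝ) : signChanges [a] = 0 := by simp [signChanges]

lemma signChanges_le_cons (a : ℝ) (l : List ℝ) : signChanges l ≤ signChanges (a :: l) := by
  cases l with
  | nil => simp [signChanges]
  | cons b t => rw [signChanges_cons_cons]; omega

lemma sign_triangle {a h b : ℝ} (ha : a ≠ 0) (hh : h ≠ 0) (hab : a * b < 0) :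
    a * h < 0 ∨ h * b < 0 := by
  rcases lt_or_gt_of_ne ha with ha' | ha' <;> rcases lt_or_gt_of_ne hh with hh' | hh' <;>
    [skip; left; left; skip] <;> [right; skip; skip; right] <;> nlinarith

lemma signChanges_cons_insert {a b : ℝ} (ha : a ≠ 0) (hb : b ≠ 0) (l : List ℝ)
    (hl : ∀ x ∈ l, x ≠ 0) :
    signChanges (a :: l) ≤ signChanges (a :: b :: l) := by
  cases l with
  | nil => simp [signChanges]
  | cons c t =>
      have hc : c ≠ 0 := hl c (List.mem_cons_self)
      rw [signChanges_cons_cons, signChanges_cons_cons a b, signChanges_cons_cons b c]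
      by_cases hac : a * c < 0
      · rcases sign_triangle ha hb hac with h1 | h1 <;> simp only [hac, if_pos, h1] <;>
          split <;> omega
      · simp only [hac, if_neg, not_false_iff]; omega

lemma signChanges_sublist_cons {l₁ l₂ : List ℝ} (h : l₁ <+ l₂)
    (hnz : ∀ x ∈ l₂, x ≠ 0) :
    ∀ a : ℝ, a ≠ 0 → signChanges (a :: l₁) ≤ signChanges (a :: l₂) := by
  induction h with
  | slnil => intro a _; exact le_refl _
  | @cons l₁' l₂' b h ih =>
      intro a ha
      have hb : b ≠ 0 := hnz b (List.mem_cons_self)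
      have hnz' : ∀ x ∈ l₂', x ≠ 0 := fun x hx => hnz x (List.mem_cons_of_mem _ hx)
      exact (ih hnz' a ha).trans (signChanges_cons_insert ha hb l₂' hnz')
  | @cons_cons l₁' l₂' b h ih =>
      intro a ha
      have hb : b ≠ 0 := hnz b (List.mem_cons_self)
      have hnz' : ∀ x ∈ l₂', x ≠ 0 := fun x hx => hnz x (List.mem_cons_of_mem _ hx)
      rw [signChanges_cons_cons, signChanges_cons_cons]
      exact Nat.add_le_add_left (ih hnz' b hb) _

lemma signChanges_sublist {l₁ l₂ : List ℝ} (h : l₁ <+ l₂) (hnz : ∀ x ∈ l₂, x ≠ 0) :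
    signChanges l₁ ≤ signChanges l₂ := by
  cases h with
  | slnil => exact le_refl _
  | @cons l₁' l₂' b h =>
      have hnz' : ∀ x ∈ l₂', x ≠ 0 := fun x hx => hnz x (List.mem_cons_of_mem _ hx)
      exact (signChanges_sublist h hnz').trans (signChanges_le_cons _ _)
  | @cons_cons l₁' l₂' b h =>
      exact signChanges_sublist_cons h (fun x hx => hnz x (List.mem_cons_of_mem _ hx)) b
        (hnz b (List.mem_cons_self))
termination_by l₂.length

lemma filter_sublist_forall₂ : ∀ {l₁ l₂ : List ℝ},
    List.Forall₂ (fun x y => x ≠ 0 → x = y) l₁ l₂ →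
    l₁.filter (fun x => decide (x ≠ 0)) <+ l₂ := by
  intro l₁ l₂ h
  induction h with
  | nil => simp
  | @cons x y l₁' l₂' hxy _ ih =>
      by_cases hx : x = 0
      · subst hx; simpa using ih.trans (List.sublist_cons_self y l₂')
      · rw [List.filter_cons, if_pos (by simpa using hx), hxy hx]
        exact ih.cons₂ y

lemma sMinus_le_sPlus {n : ℕ} (y : Fin n → ℝ) : sMinus y ≤ sPlus y := by
  set g : Fin n → ℝ := fun i => if y i = 0 then (if (fun _ => true) i then (1:ℝ) else -1) else y i
    with hg
  have h1 : List.Forall₂ (fun x z : ℝ => x ≠ 0 → x = z) (List.ofFn y) (List.ofFn g) := by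
    rw [List.forall₂_iff_get]
    refine ⟨by simp, fun i h1 h2 => ?_⟩
    simp only [List.get_ofFn]
    intro hx
    simp only [hg]
    rw [if_neg]
    · rfl
    · simpa using hx
  have h2 : ∀ x ∈ List.ofFn g, x ≠ 0 := by
    intro x hx
    rw [List.mem_ofFn] at hx
    obtain ⟨i, rfl⟩ := hx
    simp only [hg]
    split
    · norm_num
    · assumption
  have := signChanges_sublist (filter_sublist_forall₂ h1) h2
  refine le_trans this ?_
  exact Finset.le_sup (f := fun ε : Fin n → Bool =>
    signChanges (List.ofFn fun i => if y i = 0 then (if ε i then (1:ℝ) else -1) else y i))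
    (Finset.mem_univ (fun _ => true))

lemma exists_alternating_sublist : ∀ (l : List ℝ), l ≠ [] → (∀ x ∈ l, x ≠ 0) →
    ∃ l', l' <+ l ∧ l'.length = signChanges l + 1 ∧ l'.head? = l.head? ∧
      l'.Chain' (fun a b => a * b < 0)
  | [], h, _ => absurd rfl h
  | [a], _, _ => ⟨[a], List.Sublist.refl _, by simp [signChanges_singleton], rfl, List.isChain_singleton _⟩
  | a :: b :: t, _, hnz => by
      have hnz' : ∀ x ∈ b :: t, x ≠ 0 := fun x hx => hnz x (List.mem_cons_of_mem _ hx)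
      have ha : a ≠ 0 := hnz a (List.mem_cons_self)
      have hb : b ≠ 0 := hnz' b (List.mem_cons_self)
      obtain ⟨l', hsub, hlen, hhead, hchain⟩ :=
        exists_alternating_sublist (b :: t) (by simp) hnz'
      obtain ⟨rest, rfl⟩ : ∃ rest, l' = b :: rest := by
        cases l' with
        | nil => simp at hhead
        | cons x rest =>
            simp only [List.head?_cons, Option.some.injEq] at hhead
            exact ⟨rest, by rw [hhead]⟩
      rw [signChanges_cons_cons]
      by_cases hab : a * b < 0
      · refine ⟨a :: b :: rest, hsub.cons₂ a, ?_, rfl, ?_⟩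
        · simp only [List.length_cons] at hlen ⊢; rw [if_pos hab]; omega
        · exact List.isChain_cons_cons.mpr ⟨hab, hchain⟩
      · have hrest : rest <+ b :: t := ((List.cons_sublist_cons).mp hsub).trans
          (List.sublist_cons_self b t)
        refine ⟨a :: rest, hrest.cons₂ a, ?_, rfl, ?_⟩
        · simp only [List.length_cons] at hlen ⊢; rw [if_neg hab]; omega
        · cases rest with
          | nil => exact List.isChain_singleton _
          | cons c rest' =>
              refine List.isChain_cons_cons.mpr ?_
              replace hchain := List.isChain_cons_cons.mp hchain
              have hc : c ≠ 0 := by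
                have := hrest.subset (List.mem_cons_self)
                exact hnz' c this
              refine ⟨?_, hchain.2⟩
              have h1 : b * c < 0 := hchain.1
              have h2 : ¬ a * b < 0 := hab
              have hab' : 0 < a * b := lt_of_le_of_ne (not_lt.mp h2)
                (by simp [mul_eq_zero, ha, hb, Ne, eq_comm])
              by_contra hctr
              push_neg at hctr
              have key : (a*c)*(b*b) = (a*b)*(b*c) := by ring
              have hlt : (a*b)*(b*c) < 0 := mul_neg_of_pos_of_neg hab' h1
              have hge : 0 ≤ (a*c)*(b*b) := mul_nonneg hctr (mul_self_nonneg b)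
              linarith

lemma alt_signs (l : List ℝ) (hnz : ∀ x ∈ l, x ≠ 0)
    (hch : l.Chain' (fun a b => a * b < 0)) :
    ∃ ε : ℝ, (ε = 1 ∨ ε = -1) ∧ ∀ q (h : q < l.length), 0 < ε * (-1)^q * l.get ⟨q, h⟩ := by
  refine ⟨if 0 < l.getD 0 0 then 1 else -1, by split <;> simp, ?_⟩
  set ε : ℝ := if 0 < l.getD 0 0 then 1 else -1 with hε
  have hε2 : ε * ε = 1 := by rw [hε]; split <;> norm_num
  intro q
  induction q with
  | zero =>
      intro h
      have h0 : l.get ⟨0, h⟩ = l.getD 0 0 := by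
        rw [List.getD_eq_getElem?_getD, List.getElem?_eq_getElem h]; rfl
      have hne : l.get ⟨0, h⟩ ≠ 0 := hnz _ (l.get_mem _)
      rw [hε, ← h0]
      rcases lt_or_gt_of_ne hne with h1 | h1
      · rw [if_neg (by exact not_lt.mpr h1.le)]; simpa using h1
      · rw [if_pos h1]; simpa using h1
  | succ q ih =>
      intro h
      have hq : q < l.length := by omega
      have hprev := ih hq
      have hadj : l.get ⟨q, hq⟩ * l.get ⟨q+1, h⟩ < 0 := by
        have := List.isChain_iff_getElem.mp hch q (by omega)
        exact this
      set s : ℝ := ε * (-1)^q with hs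
      have h4 : ((-1:ℝ)^q)^2 = 1 := by
        rw [← pow_mul, mul_comm, pow_mul]; norm_num
      have hss : s * s = 1 := by
        have : s * s = (ε*ε) * ((-1:ℝ)^q)^2 := by rw [hs]; ring
        rw [this, hε2, h4, one_mul]
      have hkey : (s * l.get ⟨q, hq⟩) * (s * l.get ⟨q+1, h⟩) < 0 := by
        rw [show (s * l.get ⟨q, hq⟩) * (s * l.get ⟨q+1, h⟩)
            = (s*s) * (l.get ⟨q, hq⟩ * l.get ⟨q+1, h⟩) by ring, hss, one_mul]
        exact hadj
      have h2 : s * l.get ⟨q+1, h⟩ < 0 := by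
        by_contra hc
        push_neg at hc
        nlinarith
      have : ε * (-1)^(q+1) * l.get ⟨q+1, h⟩ = -(s * l.get ⟨q+1, h⟩) := by
        rw [hs, pow_succ]; ring
      rw [this]
      linarith

lemma sPlus_exists_alt {n : ℕ} {y : Fin n → ℝ} {m : ℕ} (hm1 : 1 ≤ m) (hm : m ≤ sPlus y) :
    ∃ (i : Fin (m+1) → Fin n) (ε : ℝ), StrictMono i ∧ (ε = 1 ∨ ε = -1) ∧
      ∀ p : Fin (m+1), 0 ≤ ε * (-1)^(p:ℕ) * y (i p) := by
  classical
  obtain ⟨ε₀, -, hε₀⟩ := Finset.exists_mem_eq_sup (Finset.univ : Finset (Fin n → Bool))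
    ⟨fun _ => true, Finset.mem_univ _⟩
    (fun ε => signChanges (List.ofFn fun i => if y i = 0 then (if ε i then (1:ℝ) else -1) else y i))
  set g : Fin n → ℝ := fun i => if y i = 0 then (if ε₀ i then (1:ℝ) else -1) else y i with hg
  set L : List ℝ := List.ofFn g with hL
  have hsc : m ≤ signChanges L := by rw [hL, ← hε₀]; exact hm
  have hLnz : ∀ x ∈ L, x ≠ 0 := by
    intro x hx
    rw [hL, List.mem_ofFn] at hx
    obtain ⟨i, rfl⟩ := hx
    by_cases hyi : y i = 0
    · simp only [hg, hyi, if_true, if_pos]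
      split <;> norm_num
    · simp only [hg, if_neg hyi]
      exact hyi
  have hLne : L ≠ [] := by
    intro hnil
    rw [hnil, signChanges_nil] at hsc
    exact absurd (le_trans hm1 hsc) (by norm_num)
  obtain ⟨l', hsub, hlen, -, hchain⟩ := exists_alternating_sublist L hLne hLnz
  set l'' := l'.take (m+1) with hl''
  have hsub'' : l'' <+ L := (List.take_sublist _ _).trans hsub
  have hlen'' : l''.length = m + 1 := by
    rw [hl'', List.length_take, hlen]
    exact Nat.min_eq_left (Nat.succ_le_succ hsc)
  have hch'' : l''.Chain' (fun a b => a * b < 0) := hchain.take _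
  have hnz'' : ∀ x ∈ l'', x ≠ 0 := fun x hx => hLnz x (hsub''.subset hx)
  obtain ⟨f, hf⟩ := List.sublist_iff_exists_fin_orderEmbedding_get_eq.mp hsub''
  have hLlen : L.length = n := by rw [hL, List.length_ofFn]
  set idx : Fin (m+1) → Fin n := fun p =>
    Fin.cast hLlen (f (Fin.cast hlen''.symm p)) with hidx
  have hmono : StrictMono idx := by
    intro p q hpq
    have h1 : (Fin.cast hlen''.symm p) < (Fin.cast hlen''.symm q) := by
      rw [Fin.lt_def] at hpq ⊢; exact hpq
    have h2 := f.strictMono h1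
    rw [Fin.lt_def] at h2 ⊢
    exact h2
  have hval : ∀ p : Fin (m+1), g (idx p) = l''.get (Fin.cast hlen''.symm p) := by
    intro p
    rw [hf (Fin.cast hlen''.symm p)]
    show g (idx p) = (List.ofFn g).get (f (Fin.cast hlen''.symm p))
    rw [List.get_ofFn]
  obtain ⟨ε, hε, halt⟩ := alt_signs l'' hnz'' hch''
  refine ⟨idx, ε, hmono, hε, ?_⟩
  intro p
  by_cases hyz : y (idx p) = 0
  · rw [hyz]; simp
  · have hgy : g (idx p) = y (idx p) := by rw [hg]; simp [hyz]
    have := halt (p : ℕ) (by rw [hlen'']; exact p.isLt)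
    have hgv : l''.get ⟨(p : ℕ), by rw [hlen'']; exact p.isLt⟩ = y (idx p) := by
      rw [← hgy, hval p]; rfl
    rw [hgv] at this
    exact this.le

lemma getD_eq_get' (t : List ℝ) (p : ℕ) (h : p < t.length) : t.getD p 0 = t.get ⟨p, h⟩ := by
  rw [List.getD_eq_getElem?_getD, List.getElem?_eq_getElem h]
  rfl

lemma firstNonzero : ∀ (t : List ℝ) (b : ℝ) (rest : List ℝ),
    t.filter (fun x => decide (x ≠ 0)) = b :: rest →
    ∃ p, p < t.length ∧ t.getD p 0 = b ∧ ∀ p' < p, t.getD p' 0 = 0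
  | [], b, rest, h => by simp at h
  | a :: t', b, rest, h => by
      by_cases ha : a = 0
      · rw [List.filter_cons, if_neg (by simp [ha])] at h
        obtain ⟨p, hp, hpb, hpz⟩ := firstNonzero t' b rest h
        refine ⟨p + 1, by simpa using hp, by simpa using hpb, ?_⟩
        intro p' hp'
        cases p' with
        | zero => simpa using ha
        | succ p'' => simpa using hpz p'' (by omega)
      · rw [List.filter_cons, if_pos (by simpa using ha)] at h
        obtain ⟨rfl, -⟩ := List.cons_eq_cons.mp h
        exact ⟨0, by simp, by simp, fun p' hp' => absurd hp' (by omega)⟩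

lemma blockLemma : ∀ (l : List ℝ), ∃ (σ : ℝ) (J : ℕ → ℕ),
    (σ = 1 ∨ σ = -1) ∧ Monotone J ∧
    (∀ p, p < l.length → J p ≤ signChanges (l.filter (fun x => decide (x ≠ 0)))) ∧
    (∀ p, p < l.length → 0 ≤ σ * (-1)^(J p) * l.getD p 0) ∧
    (∀ p, p < l.length → l.getD p 0 ≠ 0 → (∀ p' < p, l.getD p' 0 = 0) →
      0 < σ * l.getD p 0 ∧ J p = 0) ∧
    (∀ q, q ≤ signChanges (l.filter (fun x => decide (x ≠ 0))) →
      (∃ p, p < l.length ∧ l.getD p 0 ≠ 0) →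
      ∃ p, p < l.length ∧ J p = q ∧ l.getD p 0 ≠ 0)
  | [] => ⟨1, fun _ => 0, Or.inl rfl, monotone_const, fun p hp => absurd hp (by simp),
      fun p hp => absurd hp (by simp), fun p hp => absurd hp (by simp),
      fun q hq hex => absurd hex (by simp)⟩
  | a :: t => by
      obtain ⟨σt, Jt, hσt, hmt, hbt, hst, hft, hwt⟩ := blockLemma t
      have hσt2 : σt * σt = 1 := by rcases hσt with h | h <;> rw [h] <;> norm_num
      by_cases ha : a = 0
      · -- head is zero
        have hF : (a :: t).filter (fun x => decide (x ≠ 0)) =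
            t.filter (fun x => decide (x ≠ 0)) := by
          rw [List.filter_cons, if_neg (by simp [ha])]
        refine ⟨σt, fun p => match p with | 0 => 0 | (p'+1) => Jt p', hσt, ?_, ?_, ?_, ?_, ?_⟩
        · intro p q hpq
          match p, q with
          | 0, _ => exact Nat.zero_le _
          | (p'+1), (q'+1) => exact hmt (by omega)
        · intro p hp
          rw [hF]
          match p with
          | 0 => exact Nat.zero_le _
          | (p'+1) => exact hbt p' (by simpa using hp)
        · intro p hp
          match p with
          | 0 => simp [ha]
          | (p'+1) => simpa using hst p' (by simpa using hp)
        · intro p hp hnz hz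
          match p with
          | 0 => exact absurd (by simpa using ha) hnz
          | (p'+1) =>
              have hz' : ∀ p'' < p', t.getD p'' 0 = 0 := fun p'' h'' => by
                simpa using hz (p''+1) (by omega)
              simpa using hft p' (by simpa using hp) (by simpa using hnz) hz'
        · intro q hq hex
          rw [hF] at hq
          obtain ⟨p, hp, hpnz⟩ := hex
          have hex' : ∃ p, p < t.length ∧ t.getD p 0 ≠ 0 := by
            match p with
            | 0 => exact absurd (by simpa using ha) hpnz
            | (p'+1) => exact ⟨p', by simpa using hp, by simpa using hpnz⟩
          obtain ⟨pt, hpt, hJ, hnz⟩ := hwt q hq hex'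
          exact ⟨pt + 1, by simpa using hpt, hJ, by simpa using hnz⟩
      · -- head nonzero
        have hF : (a :: t).filter (fun x => decide (x ≠ 0)) =
            a :: t.filter (fun x => decide (x ≠ 0)) := by
          rw [List.filter_cons, if_pos (by simpa using ha)]
        rcases hFt : t.filter (fun x => decide (x ≠ 0)) with _ | ⟨b, rest⟩
        · -- tail has no nonzero entries
          have htz : ∀ p, p < t.length → t.getD p 0 = 0 := by
            intro p hp
            have hmem : t.getD p 0 ∈ t := by
              rw [getD_eq_get' t p hp]; exact t.get_mem _
            have := List.filter_eq_nil_iff.mp hFt _ hmem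
            simpa using this
          have hs0 : signChanges ((a :: t).filter (fun x => decide (x ≠ 0))) = 0 := by
            rw [hF, hFt, signChanges_singleton]
          refine ⟨if 0 < a then 1 else -1, fun _ => 0, by split <;> simp,
            monotone_const, ?_, ?_, ?_, ?_⟩
          · intro p hp; simp
          · intro p hp
            match p with
            | 0 =>
                simp only [List.getD_cons_zero, pow_zero, mul_one, one_mul]
                rcases lt_or_gt_of_ne ha with h1 | h1
                · rw [if_neg (by exact not_lt.mpr h1.le)]; nlinarith
                · rw [if_pos h1]; nlinarith
            | (p'+1) =>
                rw [List.getD_cons_succ, htz p' (by simpa using hp)]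
                simp
          · intro p hp hnz hz
            match p with
            | 0 =>
                refine ⟨?_, rfl⟩
                simp only [List.getD_cons_zero]
                rcases lt_or_gt_of_ne ha with h1 | h1
                · rw [if_neg (by exact not_lt.mpr h1.le)]; nlinarith
                · rw [if_pos h1]; nlinarith
            | (p'+1) =>
                rw [List.getD_cons_succ] at hnz
                exact absurd (htz p' (by simpa using hp)) hnz
          · intro q hq hex
            rw [hs0] at hq
            interval_cases q
            exact ⟨0, by simp, rfl, by simpa using ha⟩
        · -- tail has a first nonzero entry b
          obtain ⟨pb, hpb, hpbv, hpbz⟩ := firstNonzero t b rest hFt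
          have hbnz : b ≠ 0 := by
            have : b ∈ t.filter (fun x => decide (x ≠ 0)) := by rw [hFt]; simp
            simpa using (List.mem_filter.mp this).2
          have hbval : t.getD pb 0 ≠ 0 := by rw [hpbv]; exact hbnz
          obtain ⟨hσb, hJb⟩ := hft pb hpb hbval hpbz
          rw [hpbv] at hσb
          have hsF : signChanges ((a :: t).filter (fun x => decide (x ≠ 0))) =
              (if a * b < 0 then 1 else 0) +
                signChanges (t.filter (fun x => decide (x ≠ 0))) := by
            rw [hF, hFt, signChanges_cons_cons, ← hFt]
          by_cases hab : a * b < 0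
          · -- sign change at the head
            have hσa : 0 < (-σt) * a := by
              have h1 : (σt*a)*(σt*b) = a * b := by
                rw [show (σt*a)*(σt*b) = (σt*σt)*(a*b) by ring, hσt2, one_mul]
              nlinarith
            refine ⟨-σt, fun p => match p with | 0 => 0 | (p'+1) => Jt p' + 1,
              by rcases hσt with h | h <;> rw [h] <;> [right; left] <;> norm_num,
              ?_, ?_, ?_, ?_, ?_⟩
            · intro p q hpq
              match p, q with
              | 0, _ => exact Nat.zero_le _
              | (p'+1), (q'+1) => exact Nat.add_le_add_right (hmt (by omega)) 1
            · intro p hp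
              rw [hsF, if_pos hab]
              match p with
              | 0 => exact Nat.zero_le _
              | (p'+1) =>
                  have := hbt p' (by simpa using hp)
                  show Jt p' + 1 ≤ _
                  omega
            · intro p hp
              match p with
              | 0 => simpa using hσa.le
              | (p'+1) =>
                  have := hst p' (by simpa using hp)
                  have heq : (-σt) * (-1:ℝ)^(Jt p' + 1) = σt * (-1)^(Jt p') := by
                    rw [pow_succ]; ring
                  calc (0:ℝ) ≤ σt * (-1)^(Jt p') * t.getD p' 0 := this
                    _ = (-σt) * (-1)^(Jt p' + 1) * ((a :: t).getD (p'+1) 0) := by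
                        rw [heq, List.getD_cons_succ]
            · intro p hp hnz hz
              match p with
              | 0 => exact ⟨by simpa using hσa, rfl⟩
              | (p'+1) => exact absurd (hz 0 (by omega)) (by simpa using ha)
            · intro q hq hex
              match q with
              | 0 => exact ⟨0, by simp, rfl, by simpa using ha⟩
              | (q'+1) =>
                  rw [hsF, if_pos hab] at hq
                  obtain ⟨pt, hpt, hJ, hnz⟩ := hwt q' (by omega) ⟨pb, hpb, hbval⟩
                  exact ⟨pt + 1, by simpa using hpt, by simpa using hJ,
                    by simpa using hnz⟩
          · -- no sign change at the head
            have hσa : 0 < σt * a := by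
              have hab' : 0 < a * b := lt_of_le_of_ne (not_lt.mp hab)
                (by simp [mul_eq_zero, ha, hbnz, Ne, eq_comm])
              have h1 : (σt*a)*(σt*b) = a * b := by
                rw [show (σt*a)*(σt*b) = (σt*σt)*(a*b) by ring, hσt2, one_mul]
              nlinarith
            refine ⟨σt, fun p => match p with | 0 => 0 | (p'+1) => Jt p', hσt,
              ?_, ?_, ?_, ?_, ?_⟩
            · intro p q hpq
              match p, q with
              | 0, _ => exact Nat.zero_le _
              | (p'+1), (q'+1) => exact hmt (by omega)
            · intro p hp
              rw [hsF, if_neg hab]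
              match p with
              | 0 => exact Nat.zero_le _
              | (p'+1) =>
                  have := hbt p' (by simpa using hp)
                  show Jt p' ≤ _
                  omega
            · intro p hp
              match p with
              | 0 => simpa using hσa.le
              | (p'+1) => simpa using hst p' (by simpa using hp)
            · intro p hp hnz hz
              match p with
              | 0 => exact ⟨by simpa using hσa, rfl⟩
              | (p'+1) => exact absurd (hz 0 (by omega)) (by simpa using ha)
            · intro q hq hex
              rw [hsF, if_neg hab] at hq
              obtain ⟨pt, hpt, hJ, hnz⟩ := hwt q (by omega) ⟨pb, hpb, hbval⟩
              exact ⟨pt + 1, by simpa using hpt, by simpa using hJ, by simpa using hnz⟩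

lemma blockLemmaFin {n : ℕ} (x : Fin n → ℝ) :
    ∃ (σ : ℝ) (J : Fin n → ℕ),
      (σ = 1 ∨ σ = -1) ∧ (∀ j j' : Fin n, j ≤ j' → J j ≤ J j') ∧
      (∀ j, J j ≤ sMinus x) ∧
      (∀ j, 0 ≤ σ * (-1)^(J j) * x j) ∧
      (∀ q, q ≤ sMinus x → x ≠ 0 → ∃ j, J j = q ∧ x j ≠ 0) := by
  obtain ⟨σ, J, hσ, hmono, hb, hs, -, hw⟩ := blockLemma (List.ofFn x)
  have hlen : (List.ofFn x).length = n := List.length_ofFn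
  have hget : ∀ j : Fin n, (List.ofFn x).getD (j : ℕ) 0 = x j := by
    intro j
    rw [getD_eq_get' _ _ (by rw [hlen]; exact j.isLt), List.get_ofFn]
    exact congrArg x (Fin.ext rfl)
  refine ⟨σ, fun j => J (j : ℕ), hσ, fun j j' hjj => hmono hjj, ?_, ?_, ?_⟩
  · intro j
    exact hb (j : ℕ) (by rw [hlen]; exact j.isLt)
  · intro j
    have := hs (j : ℕ) (by rw [hlen]; exact j.isLt)
    rwa [hget j] at this
  · intro q hq hx
    obtain ⟨j, hjne⟩ := Function.ne_iff.mp hx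
    have hex : ∃ p, p < (List.ofFn x).length ∧ (List.ofFn x).getD p 0 ≠ 0 := by
      refine ⟨(j : ℕ), by rw [hlen]; exact j.isLt, ?_⟩
      rw [hget j]; simpa using hjne
    obtain ⟨p, hp, hJp, hpne⟩ := hw q hq hex
    rw [hlen] at hp
    refine ⟨⟨p, hp⟩, hJp, ?_⟩
    rwa [hget ⟨p, hp⟩] at hpne

theorem variationDiminishing {n : ℕ} (M : Matrix (Fin n) (Fin n) ℝ) (hM : IsTP M)
    (x : Fin n → ℝ) (hx : x ≠ 0) : sPlus (M.mulVec x) ≤ sMinus x := by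
  classical
  by_contra hcon
  push_neg at hcon
  set l := sMinus x with hl
  obtain ⟨i, ε, himono, hε, halt⟩ := sPlus_exists_alt (m := l + 1) (by omega) hcon
  obtain ⟨σ, J, hσ, hJmono, hJb, hJsign, hJwit⟩ := blockLemmaFin x
  have hσ2 : σ * σ = 1 := by rcases hσ with h | h <;> rw [h] <;> norm_num
  have hε2 : ε * ε = 1 := by rcases hε with h | h <;> rw [h] <;> norm_num
  set J' : Fin n → Fin (l+1) := fun j => ⟨J j, Nat.lt_succ_of_le (hJb j)⟩ with hJ'
  set C : Matrix (Fin (l+2)) (Fin (l+1)) ℝ :=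
    Matrix.of (fun p q => ∑ j ∈ Finset.univ.filter (fun j => J' j = q), |x j| * M (i p) j)
    with hC
  have hCapply : ∀ p q, C p q = ∑ j ∈ Finset.univ.filter (fun j => J' j = q),
      |x j| * M (i p) j := fun p q => rfl
  -- all maximal minors of C are positive
  have hminor : ∀ r : Fin (l+1) → Fin (l+2), StrictMono r →
      0 < (C.submatrix r id).det := by
    intro r hr
    rw [← Matrix.det_transpose]
    have hrows : ((C.submatrix r id)ᵀ : Matrix (Fin (l+1)) (Fin (l+1)) ℝ) =
        fun q => ∑ j ∈ Finset.univ.filter (fun j => J' j = q),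
          |x j| • (fun p => M (i (r p)) j) := by
      funext q p
      simp only [Matrix.transpose_apply, Matrix.submatrix_apply, id]
      rw [hCapply, Finset.sum_apply]
      simp [smul_eq_mul]
    have hdet : ((C.submatrix r id)ᵀ).det =
        (Matrix.detRowAlternating :
            AlternatingMap ℝ (Fin (l+1) → ℝ) ℝ (Fin (l+1))).toMultilinearMap
          (fun q => ∑ j ∈ Finset.univ.filter (fun j => J' j = q),
            |x j| • (fun p : Fin (l+1) => M (i (r p)) j)) := by
      rw [hrows]; rfl
    rw [hdet, MultilinearMap.map_sum_finset]
    have hfmono : ∀ f : Fin (l+1) → Fin n, (∀ q, J' (f q) = q) → StrictMono f := by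
      intro f hf q q' hqq
      by_contra hc
      push_neg at hc
      have h1 : J (f q') ≤ J (f q) := hJmono _ _ hc
      have e1 : J (f q) = (q : ℕ) := congrArg Fin.val (hf q)
      have e2 : J (f q') = (q' : ℕ) := congrArg Fin.val (hf q')
      exact absurd hqq (by rw [Fin.lt_def]; omega)
    have hterm : ∀ f : Fin (l+1) → Fin n, (∀ q, J' (f q) = q) →
        ((Matrix.detRowAlternating :
            AlternatingMap ℝ (Fin (l+1) → ℝ) ℝ (Fin (l+1))).toMultilinearMap
          (fun q => |x (f q)| • (fun p : Fin (l+1) => M (i (r p)) (f q))))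
        = (∏ q, |x (f q)|) * (M.submatrix (fun p => i (r p)) f).det := by
      intro f hf
      rw [MultilinearMap.map_smul_univ, smul_eq_mul]
      congr 1
      have h3 : ((Matrix.detRowAlternating :
          AlternatingMap ℝ (Fin (l+1) → ℝ) ℝ (Fin (l+1))).toMultilinearMap
            (fun q => (fun p : Fin (l+1) => M (i (r p)) (f q))))
          = ((M.submatrix (fun p => i (r p)) f)ᵀ).det := rfl
      rw [h3, Matrix.det_transpose]
    refine Finset.sum_pos' ?_ ?_
    · intro f hfmem
      have hfA : ∀ q, J' (f q) = q := by
        intro q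
        have := (Fintype.mem_piFinset.mp hfmem) q
        simpa using this
      rw [hterm f hfA]
      have hir : StrictMono (fun p => i (r p)) := fun a b hab => himono (hr hab)
      have hd := hM (l+1) (fun p => i (r p)) f hir (hfmono f hfA)
      positivity
    · have hwit : ∀ q : Fin (l+1), ∃ j, J' j = q ∧ x j ≠ 0 := by
        intro q
        obtain ⟨j, hj1, hj2⟩ := hJwit (q : ℕ) (by omega) hx
        exact ⟨j, by rw [hJ']; exact Fin.ext (by simpa using hj1), hj2⟩
      choose f₀ hf₀1 hf₀2 using hwit
      refine ⟨f₀, Fintype.mem_piFinset.mpr (fun q => by simp [hf₀1 q]), ?_⟩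
      rw [hterm f₀ hf₀1]
      have hir : StrictMono (fun p => i (r p)) := fun a b hab => himono (hr hab)
      have hdetpos := hM (l+1) (fun p => i (r p)) f₀ hir (hfmono f₀ hf₀1)
      have hprod : 0 < ∏ q, |x (f₀ q)| :=
        Finset.prod_pos (fun q _ => abs_pos.mpr (hf₀2 q))
      positivity
  -- the alternating vector v and w = C *ᵥ v
  set v : Fin (l+1) → ℝ := fun q => (-1)^(q:ℕ) with hv
  have hmvapply : ∀ p, C.mulVec v p = ∑ q, C p q * v q := fun p => rfl
  have habs : ∀ j : Fin n, (-1:ℝ)^(J j) * |x j| = σ * x j := by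
    intro j
    have hsj := hJsign j
    have hpow2 : ((-1:ℝ)^(J j)) * ((-1:ℝ)^(J j)) = 1 := by
      rw [← pow_add, ← two_mul, pow_mul]; norm_num
    have ht : σ * (-1:ℝ)^(J j) = 1 ∨ σ * (-1:ℝ)^(J j) = -1 := by
      rcases hσ with h | h <;> rcases Nat.even_or_odd (J j) with hp | hp
      · left; rw [h, hp.neg_one_pow]; norm_num
      · right; rw [h, hp.neg_one_pow]; norm_num
      · right; rw [h, hp.neg_one_pow]; norm_num
      · left; rw [h, hp.neg_one_pow]; norm_num
    rcases ht with h | h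
    · have hxj : 0 ≤ x j := by nlinarith
      rw [abs_of_nonneg hxj]
      linear_combination (x j * σ) * h + (-(x j * (-1:ℝ)^(J j))) * hσ2
    · have hxj : x j ≤ 0 := by nlinarith
      rw [abs_of_nonpos hxj]
      linear_combination (-(σ * x j)) * h + (x j * (-1:ℝ)^(J j)) * hσ2
  have hwval : ∀ p : Fin (l+2), C.mulVec v p = σ * (M.mulVec x) (i p) := by
    intro p
    have e2 : (M.mulVec x) (i p) = ∑ j, M (i p) j * x j := rfl
    rw [hmvapply, e2, Finset.mul_sum]
    have h1 : ∀ q : Fin (l+1), C p q * v q =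
        ∑ j ∈ Finset.univ.filter (fun j => J' j = q), (-1:ℝ)^(J j) * |x j| * M (i p) j := by
      intro q
      rw [hCapply, Finset.sum_mul]
      refine Finset.sum_congr rfl (fun j hj => ?_)
      have hJj : J' j = q := by simpa using hj
      have hJv : (J j : ℕ) = (q : ℕ) := congrArg Fin.val hJj
      show |x j| * M (i p) j * (-1)^(q:ℕ) = _
      rw [← hJv]
      ring
    rw [Finset.sum_congr rfl (fun q _ => h1 q),
      Finset.sum_fiberwise Finset.univ J' (fun j => (-1:ℝ)^(J j) * |x j| * M (i p) j)]
    refine Finset.sum_congr rfl (fun j _ => ?_)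
    rw [show (-1:ℝ)^(J j) * |x j| * M (i p) j = ((-1:ℝ)^(J j) * |x j|) * M (i p) j from rfl,
      habs j]
    ring
  -- the bordered matrix D and the Laplace expansion
  set D : Matrix (Fin (l+2)) (Fin (l+2)) ℝ :=
    Matrix.of (fun p => Fin.snoc (fun q => C p q) (C.mulVec v p)) with hD
  have hDcast : ∀ p (q : Fin (l+1)), D p (Fin.castSucc q) = C p q := by
    intro p q
    simp only [hD, Matrix.of_apply, Fin.snoc_castSucc]
  have hDlast : ∀ p, D p (Fin.last (l+1)) = C.mulVec v p := by
    intro p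
    simp only [hD, Matrix.of_apply, Fin.snoc_last]
  have hdet0 : D.det = 0 := by
    rw [← Matrix.exists_mulVec_eq_zero_iff]
    refine ⟨(Fin.snoc v (-1) : Fin (l+2) → ℝ), ?_, ?_⟩
    · intro h
      have := congrFun h (Fin.last (l+1))
      rw [Fin.snoc_last] at this
      norm_num at this
    · funext p
      have e1 : D.mulVec (Fin.snoc v (-1) : Fin (l+2) → ℝ) p
          = ∑ q, D p q * (Fin.snoc v (-1) : Fin (l+2) → ℝ) q := rfl
      rw [e1, Fin.sum_univ_castSucc]
      have e3 : ∀ q : Fin (l+1), D p (Fin.castSucc q)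
          * (Fin.snoc v (-1) : Fin (l+2) → ℝ) (Fin.castSucc q) = C p q * v q := by
        intro q
        rw [hDcast, Fin.snoc_castSucc]
      rw [Finset.sum_congr rfl (fun q _ => e3 q), hDlast, Fin.snoc_last, hmvapply p]
      show (∑ q, C p q * v q) + (∑ q, C p q * v q) * (-1) = 0
      ring
  have hexp := Matrix.det_succ_column D (Fin.last (l+1))
  rw [hdet0] at hexp
  have hsub : ∀ p : Fin (l+2), D.submatrix p.succAbove (Fin.last (l+1)).succAbove
      = C.submatrix p.succAbove id := by
    intro p
    funext q q'
    rw [Matrix.submatrix_apply, Matrix.submatrix_apply, Fin.succAbove_last, hDcast, id]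
  have hexp2 : (0:ℝ) = ∑ p : Fin (l+2),
      (-1)^((p:ℕ) + (l+1)) * (C.mulVec v p) * (C.submatrix p.succAbove id).det := by
    rw [hexp]
    refine Finset.sum_congr rfl (fun p _ => ?_)
    rw [hDlast, hsub]
    simp [Fin.val_last]
  have hmp : ∀ p : Fin (l+2), 0 < (C.submatrix p.succAbove id).det :=
    fun p => hminor _ (Fin.strictMono_succAbove p)
  have hpow2 : ((-1:ℝ)^(l+1)) * ((-1:ℝ)^(l+1)) = 1 := by
    rw [← pow_add, ← two_mul, pow_mul]; norm_num
  have hS0 : ∑ p : Fin (l+2),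
      (ε * (-1)^(p:ℕ) * (M.mulVec x) (i p)) * (C.submatrix p.succAbove id).det = 0 := by
    have hpe : ∀ p : Fin (l+2),
        (ε * (-1)^(p:ℕ) * (M.mulVec x) (i p)) * (C.submatrix p.succAbove id).det
        = (ε * σ * (-1)^(l+1)) *
          ((-1)^((p:ℕ) + (l+1)) * (C.mulVec v p) * (C.submatrix p.succAbove id).det) := by
      intro p
      rw [hwval p, pow_add]
      linear_combination
        (-(ε * (-1:ℝ)^(p:ℕ) * (M.mulVec x) (i p) * (C.submatrix p.succAbove id).det
          * (σ * σ))) * hpow2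
        + (-(ε * (-1:ℝ)^(p:ℕ) * (M.mulVec x) (i p)
            * (C.submatrix p.succAbove id).det)) * hσ2
    rw [Finset.sum_congr rfl (fun p _ => hpe p), ← Finset.mul_sum, ← hexp2, mul_zero]
  have hz : ∀ p : Fin (l+2), (M.mulVec x) (i p) = 0 := by
    have hnn : ∀ p ∈ (Finset.univ : Finset (Fin (l+2))), (0:ℝ) ≤
        (ε * (-1)^(p:ℕ) * (M.mulVec x) (i p)) * (C.submatrix p.succAbove id).det :=
      fun p _ => mul_nonneg (halt p) (hmp p).le
    have := (Finset.sum_eq_zero_iff_of_nonneg hnn).mp hS0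
    intro p
    have h0 := this p (Finset.mem_univ p)
    have h1 : ε * (-1)^(p:ℕ) * (M.mulVec x) (i p) = 0 := by
      rcases mul_eq_zero.mp h0 with h | h
      · exact h
      · exact absurd h (hmp p).ne'
    have hεp : ε * (-1:ℝ)^(p:ℕ) ≠ 0 := by
      rcases hε with h | h <;> rw [h] <;>
        simp [pow_ne_zero]
    rcases mul_eq_zero.mp h1 with h | h
    · exact absurd h hεp
    · exact h
  -- conclude v = 0, contradiction
  have hE : 0 < (C.submatrix (Fin.castSucc : Fin (l+1) → Fin (l+2)) id).det :=
    hminor _ Fin.strictMono_castSucc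
  have hE0 : (C.submatrix (Fin.castSucc : Fin (l+1) → Fin (l+2)) id).det = 0 := by
    rw [← Matrix.exists_mulVec_eq_zero_iff]
    refine ⟨v, ?_, ?_⟩
    · intro h
      have := congrFun h 0
      rw [hv] at this
      norm_num at this
    · funext p
      have e1 : (C.submatrix (Fin.castSucc : Fin (l+1) → Fin (l+2)) id).mulVec v p
          = ∑ q, C (Fin.castSucc p) q * v q := rfl
      rw [e1, ← hmvapply, hwval, hz]
      norm_num
  exact absurd hE0 hE.ne'


/-- If the transition matrix `Φ(t,t0)` of `ż = A(t)z` is TP for all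
`a < t0 < t < b`, then any nontrivial solution `z` satisfies
`s^+(z(t)) ≤ s^-(z(t0))` for `t0 < t`, and both `s^-(z(·))` and `s^+(z(·))` are
nonincreasing on `(a,b)`. -/
theorem stmt3 {n : ℕ}
    (a b : ℝ) (A : ℝ → Matrix (Fin n) (Fin n) ℝ)
    (Φ : ℝ → ℝ → Matrix (Fin n) (Fin n) ℝ)
    (hreg : GoodCoeff a b A) (htrans : IsTransitionOn a b A Φ)
    (hTP : ∀ t0 t : ℝ, a < t0 → t0 < t → t < b → IsTP (Φ t t0))
    (z : ℝ → Fin n → ℝ)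
    (hz : ∀ t0 ∈ Set.Ioo a b, ∀ t ∈ Set.Ioo a b, t0 ≤ t → z t = (Φ t t0).mulVec (z t0))
    (hz0 : ∃ t1 ∈ Set.Ioo a b, z t1 ≠ 0)
    :
    (∀ t0 ∈ Set.Ioo a b, ∀ t ∈ Set.Ioo a b, t0 < t → sPlus (z t) ≤ sMinus (z t0)) ∧
    (∀ s ∈ Set.Ioo a b, ∀ t ∈ Set.Ioo a b, s ≤ t →
      sMinus (z t) ≤ sMinus (z s) ∧ sPlus (z t) ≤ sPlus (z s)) := by
  classical
  obtain ⟨t1, ht1, hz1⟩ := hz0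
  have hznz : ∀ t0 ∈ Set.Ioo a b, z t0 ≠ 0 := by
    intro t0 ht0 h0
    rcases le_or_gt t0 t1 with hle | hlt
    · have := hz t0 ht0 t1 ht1 hle
      rw [h0, Matrix.mulVec_zero] at this
      exact hz1 this
    · have hzz := hz t1 ht1 t0 ht0 hlt.le
      have hTP' := hTP t1 t0 ht1.1 hlt ht0.2
      have hdet : 0 < (Φ t0 t1).det := by
        have := hTP' n id id strictMono_id strictMono_id
        rwa [Matrix.submatrix_id_id] at this
      have h00 : (Φ t0 t1).mulVec (z t1) = 0 := by rw [← hzz, h0]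
      have : (Φ t0 t1).det = 0 :=
        Matrix.exists_mulVec_eq_zero_iff.mp ⟨z t1, hz1, h00⟩
      exact absurd this hdet.ne'
  have part1 : ∀ t0 ∈ Set.Ioo a b, ∀ t ∈ Set.Ioo a b, t0 < t →
      sPlus (z t) ≤ sMinus (z t0) := by
    intro t0 ht0 t ht ht0t
    rw [hz t0 ht0 t ht ht0t.le]
    exact variationDiminishing _ (hTP t0 t ht0.1 ht0t ht.2) _ (hznz t0 ht0)
  refine ⟨part1, ?_⟩
  intro s hs t ht hst
  rcases eq_or_lt_of_le hst with rfl | hlt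
  · exact ⟨le_refl _, le_refl _⟩
  · have h1 := part1 s hs t ht hlt
    exact ⟨le_trans (sMinus_le_sPlus (z t)) h1, le_trans h1 (sMinus_le_sPlus (z s))⟩

end
end

section
/- Let A : (a,b) → ℝ^{n×n} be measurable and locally essentially bounded, with transition matrix Φ, and suppose Φ(t,t0) is totally positive (TP) for all a < t0 < t < b. Let z be a nontrivial solution of ż = A(t)z, i.e. z(t) = Φ(t,t0)z0 with z0 ≠ 0. Then z(t) ∈ V for all t ∈ (a,b), except perhaps for up to n − 1 values of t. -/
open Matrix MeasureTheory Set Polynomial Filter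

noncomputable section

namespace SCAux

lemma sc_nil : signChanges [] = 0 := by rw [signChanges]
lemma sc_singleton (a : ℝ) : signChanges [a] = 0 := by rw [signChanges]
lemma sc_cons (a b : ℝ) (l : List ℝ) :
    signChanges (a :: b :: l) = (if a * b < 0 then 1 else 0) + signChanges (b :: l) := by
  rw [signChanges]

lemma sc_short {l : List ℝ} (h : l.length ≤ 1) : signChanges l = 0 := by
  rcases l with _ | ⟨a, _ | ⟨b, t⟩⟩
  · exact sc_nil
  · exact sc_singleton a
  · simp at h

lemma sc_append_getLast : ∀ (l : List ℝ) (h : l ≠ []) (a : ℝ),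
    signChanges (l ++ [a]) = signChanges l + (if l.getLast h * a < 0 then 1 else 0)
  | [], h, a => absurd rfl h
  | [b], _, a => by
    simp only [List.cons_append, List.nil_append]
    rw [sc_cons, sc_singleton, sc_singleton]
    simp [List.getLast]
    split_ifs with h <;> simp [h]
  | b :: c :: t, _, a => by
    rw [List.cons_append, List.cons_append, sc_cons, sc_cons,
      List.getLast_cons (by simp : c :: t ≠ []), ← List.cons_append,
      sc_append_getLast (c :: t) (by simp) a]
    ring

lemma sc_append_le (l : List ℝ) (a : ℝ) : signChanges l ≤ signChanges (l ++ [a]) := by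
  rcases eq_or_ne l [] with rfl | h
  · simp [sc_nil, sc_singleton]
  · rw [sc_append_getLast l h a]; omega

lemma sc_append_le' (l : List ℝ) (a : ℝ) : signChanges (l ++ [a]) ≤ signChanges l + 1 := by
  rcases eq_or_ne l [] with rfl | h
  · simp [sc_nil, sc_singleton]
  · rw [sc_append_getLast l h a]; split <;> omega

lemma sc_le_length : ∀ l : List ℝ, signChanges l ≤ l.length - 1
  | [] => by simp [sc_nil]
  | [a] => by simp [sc_singleton]
  | a :: b :: t => by
    rw [sc_cons]
    have := sc_le_length (b :: t)
    simp only [List.length_cons] at *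
    split <;> omega

lemma flip_sign {a b : ℝ} (ha : a ≠ 0) (hb : b ≠ 0) :
    0 < (-1 : ℝ) ^ (if a * b < 0 then 1 else 0) * (a * b) := by
  rcases lt_or_gt_of_ne (mul_ne_zero ha hb) with h | h
  · simp only [if_pos h, pow_one]; linarith
  · simp [not_lt.2 h.le, h]

lemma lastSign : ∀ (l : List ℝ) (h : l ≠ []), (∀ x ∈ l, x ≠ 0) →
    0 < (-1 : ℝ) ^ signChanges l * (l.head h * l.getLast h)
  | [], h, _ => absurd rfl h
  | [a], _, hnz => by
    have ha : a ≠ 0 := hnz a (by simp)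
    rw [sc_singleton]
    simpa using mul_self_pos.2 ha
  | a :: b :: t, _, hnz => by
    have ha : a ≠ 0 := hnz a (by simp)
    have hb : b ≠ 0 := hnz b (by simp)
    have IH := lastSign (b :: t) (by simp) (fun x hx => hnz x (by simp [hx]))
    have hf := flip_sign ha hb
    rw [sc_cons, List.getLast_cons (by simp : b :: t ≠ [])]
    have key := mul_pos hf IH
    have hbb : 0 < b * b := mul_self_pos.2 hb
    simp only [List.head_cons] at key ⊢
    rw [pow_add]
    nlinarith [key, hbb]

end SCAux

namespace SCAux

noncomputable def nz (l : List ℝ) : List ℝ := l.filter (fun v => decide (v ≠ 0))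

lemma nz_append (l₁ l₂ : List ℝ) : nz (l₁ ++ l₂) = nz l₁ ++ nz l₂ := List.filter_append _ _

lemma nz_singleton_ne {a : ℝ} (ha : a ≠ 0) : nz [a] = [a] := by simp [nz, ha]
lemma nz_singleton_eq : nz [(0:ℝ)] = [] := by simp [nz]

lemma nz_mem_ne {l : List ℝ} {v : ℝ} (h : v ∈ nz l) : v ≠ 0 := by
  simp [nz, List.mem_filter] at h; exact h.2

noncomputable def mf {n : ℕ} (x : Fin n → ℝ) (j : ℕ) : ℕ :=
  signChanges (nz ((List.ofFn x).take (j + 1)))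

lemma take_step {n : ℕ} (x : Fin n → ℝ) {j : ℕ} (h : j < n) :
    (List.ofFn x).take (j + 1) = (List.ofFn x).take j ++ [x ⟨j, h⟩] := by
  rw [List.take_succ]
  congr 1
  rw [List.getElem?_eq_getElem (by simpa using h)]
  simp

lemma take_stop {n : ℕ} (x : Fin n → ℝ) {j : ℕ} (h : n ≤ j) :
    (List.ofFn x).take j = List.ofFn x :=
  List.take_of_length_le (by simpa using h)

lemma mf_mono_succ {n : ℕ} (x : Fin n → ℝ) (j : ℕ) : mf x j ≤ mf x (j + 1) := by
  unfold mf
  by_cases h : j + 1 < n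
  · rw [take_step x h, nz_append]
    rcases eq_or_ne (x ⟨j+1, h⟩) 0 with h0 | h0
    · rw [h0, nz_singleton_eq, List.append_nil]
    · rw [nz_singleton_ne h0]; exact sc_append_le _ _
  · rw [take_stop x (by omega), take_stop x (by omega)]

lemma mf_mono {n : ℕ} (x : Fin n → ℝ) : Monotone (mf x) :=
  monotone_nat_of_le_succ (mf_mono_succ x)

lemma mf_succ_le {n : ℕ} (x : Fin n → ℝ) (j : ℕ) : mf x (j + 1) ≤ mf x j + 1 := by
  unfold mf
  by_cases h : j + 1 < n
  · rw [take_step x h, nz_append]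
    rcases eq_or_ne (x ⟨j+1, h⟩) 0 with h0 | h0
    · rw [h0, nz_singleton_eq, List.append_nil]; omega
    · rw [nz_singleton_ne h0]; exact sc_append_le' _ _
  · rw [take_stop x (by omega), take_stop x (by omega)]; omega

lemma mf_ne {n : ℕ} (x : Fin n → ℝ) {j : ℕ} (h : mf x (j+1) ≠ mf x j) :
    ∃ h' : j + 1 < n, x ⟨j+1, h'⟩ ≠ 0 := by
  by_cases h' : j + 1 < n
  · refine ⟨h', ?_⟩
    intro h0
    apply h
    unfold mf
    rw [take_step x h', nz_append, h0, nz_singleton_eq, List.append_nil]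
  · exfalso; apply h; unfold mf
    rw [take_stop x (by omega), take_stop x (by omega)]

lemma mf_zero {n : ℕ} (x : Fin n → ℝ) : mf x 0 = 0 := by
  apply sc_short
  calc (nz ((List.ofFn x).take 1)).length ≤ ((List.ofFn x).take 1).length :=
        List.length_filter_le _ _
    _ ≤ 1 := by simp

lemma mf_last {n : ℕ} (x : Fin n → ℝ) (hn : 0 < n) :
    mf x (n - 1) = signChanges (nz (List.ofFn x)) := by
  unfold mf
  rw [take_stop x (by omega)]

lemma nz_all_ne (l : List ℝ) (h : ∀ v ∈ l, v ≠ 0) : nz l = l :=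
  List.filter_eq_self.mpr (by intro v hv; simpa using h v hv)

end SCAux

namespace SCAux

lemma head_eq_of_eq {l l' : List ℝ} (h : l = l') (hl : l ≠ []) :
    l.head hl = l'.head (h ▸ hl) := by subst h; rfl

lemma nz_ofFn_ne_nil {n : ℕ} {x : Fin n → ℝ} (j : Fin n) (hx : x j ≠ 0) :
    nz (List.ofFn x) ≠ [] := by
  have : x j ∈ nz (List.ofFn x) := by
    rw [nz, List.mem_filter]
    exact ⟨List.mem_ofFn.2 ⟨j, rfl⟩, by simp [hx]⟩
  intro h; rw [h] at this; simp at this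

lemma mf_sign {n : ℕ} {x : Fin n → ℝ} (j : Fin n) (hx : x j ≠ 0)
    (hne : nz (List.ofFn x) ≠ []) :
    0 < (-1:ℝ) ^ mf x (j : ℕ) * ((nz (List.ofFn x)).head hne * x j) := by
  have hsplit : (List.ofFn x).take ((j:ℕ) + 1) = (List.ofFn x).take (j:ℕ) ++ [x j] := by
    have := take_step x j.isLt
    simpa using this
  set l0 := nz ((List.ofFn x).take (j:ℕ)) with hl0
  have hl1 : nz ((List.ofFn x).take ((j:ℕ)+1)) = l0 ++ [x j] := by
    rw [hsplit, nz_append, nz_singleton_ne hx]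
  have hne1 : l0 ++ [x j] ≠ [] := by simp
  have hAll : ∀ v ∈ l0 ++ [x j], v ≠ 0 := by
    intro v hv; rw [← hl1] at hv; exact nz_mem_ne hv
  have hls := lastSign (l0 ++ [x j]) hne1 hAll
  have hlast : (l0 ++ [x j]).getLast hne1 = x j := List.getLast_append_singleton l0
  have hmf : mf x (j:ℕ) = signChanges (l0 ++ [x j]) := by rw [mf, hl1]
  have hfull : nz (List.ofFn x) = (l0 ++ [x j]) ++ nz ((List.ofFn x).drop ((j:ℕ)+1)) := by
    conv_lhs => rw [← List.take_append_drop ((j:ℕ)+1) (List.ofFn x)]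
    rw [nz_append, hl1]
  have hhead : (nz (List.ofFn x)).head hne = (l0 ++ [x j]).head hne1 := by
    rw [head_eq_of_eq hfull hne]
    exact List.head_append_of_ne_nil hne1
  rw [hmf, hhead]
  rw [hlast] at hls
  exact hls

lemma mf_attain {n : ℕ} {x : Fin n → ℝ} (hx : ∃ i, x i ≠ 0) {v : ℕ}
    (hv : v ≤ mf x (n - 1)) :
    ∃ j : Fin n, mf x (j : ℕ) = v ∧ x j ≠ 0 := by
  classical
  rcases Nat.eq_zero_or_pos v with rfl | hv1
  · -- v = 0 : first nonzero index
    obtain ⟨i, hi⟩ := hx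
    have hP : ∃ k, ∃ hk : k < n, x ⟨k, hk⟩ ≠ 0 := ⟨i, i.isLt, by simpa using hi⟩
    set k0 := Nat.find hP with hk0
    obtain ⟨hk0n, hk0x⟩ := Nat.find_spec hP
    refine ⟨⟨k0, hk0n⟩, ?_, hk0x⟩
    have hzero : nz ((List.ofFn x).take k0) = [] := by
      rw [nz, List.filter_eq_nil_iff]
      intro a ha
      simp only [decide_eq_true_eq, not_not, Decidable.not_not, ne_eq]
      rw [List.mem_iff_getElem] at ha
      obtain ⟨m, hm, he⟩ := ha
      have hmlt : m < k0 := by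
        have : ((List.ofFn x).take k0).length = min k0 n := by simp
        omega
      have hmn : m < n := by
        have : ((List.ofFn x).take k0).length = min k0 n := by simp
        omega
      have : a = x ⟨m, hmn⟩ := by
        rw [← he, List.getElem_take, List.getElem_ofFn]
      rw [this]
      by_contra hne
      exact Nat.find_min hP hmlt ⟨hmn, by simpa using hne⟩
    have : mf x k0 = 0 := by
      rw [mf, take_step x hk0n, nz_append, hzero, List.nil_append]
      exact sc_short (by rw [nz_singleton_ne hk0x]; simp)
    simpa using this
  · -- v ≥ 1
    have hQ : ∃ k, v ≤ mf x k := ⟨n - 1, hv⟩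
    have hQspec := Nat.find_spec hQ
    have hk0pos : Nat.find hQ ≠ 0 := by
      intro h0
      rw [h0, mf_zero] at hQspec
      omega
    obtain ⟨k1, hk1⟩ : ∃ k1, Nat.find hQ = k1 + 1 := ⟨Nat.find hQ - 1, by omega⟩
    have hlt : mf x k1 < v := by
      by_contra h
      exact Nat.find_min hQ (m := k1) (by omega) (by omega)
    rw [hk1] at hQspec
    have hle := mf_succ_le x k1
    have heq : mf x (k1 + 1) = v := by omega
    have hne : mf x (k1 + 1) ≠ mf x k1 := by omega
    obtain ⟨hlt', hx'⟩ := mf_ne x hne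
    exact ⟨⟨k1 + 1, hlt'⟩, heq, hx'⟩

end SCAux

namespace SCAux

lemma sMinus_eq {n : ℕ} (x : Fin n → ℝ) : sMinus x = signChanges (nz (List.ofFn x)) := rfl

lemma pos_of_mul_sq {K x : ℝ} (h : 0 < K * (x * x)) : 0 < K := by
  by_contra hK
  push_neg at hK
  nlinarith [mul_self_nonneg x]

lemma neg_one_pow_eq {a b : ℕ} {c : ℝ} (h1 : 0 < (-1:ℝ)^a * c) (h2 : 0 < (-1:ℝ)^b * c) :
    (-1:ℝ)^a = (-1:ℝ)^b := by
  rcases Nat.even_or_odd a with ha | ha <;> rcases Nat.even_or_odd b with hb | hb <;>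
    simp [ha.neg_one_pow, hb.neg_one_pow, Even.neg_one_pow, Odd.neg_one_pow] at * <;>
    linarith

lemma neg_one_pow_succ_ne (k : ℕ) : (-1:ℝ)^k ≠ (-1:ℝ)^(k+1) := by
  rw [pow_succ]
  intro h
  have h2 : ((-1:ℝ))^k ≠ 0 := pow_ne_zero _ (by norm_num)
  have : (2:ℝ) * (-1)^k = 0 := by linarith
  simp at this

/-- Block decomposition of a nonzero vector according to its sign changes. -/
lemma blocks {n : ℕ} {x : Fin n → ℝ} (hx : ∃ i, x i ≠ 0) :
    ∃ (δ : ℝ) (g : Fin n → Fin (sMinus x + 1)),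
      δ ≠ 0 ∧ Monotone g ∧ (∀ p, 0 ≤ (-1:ℝ)^(g p : ℕ) * δ * x p) ∧
      (∀ m, ∃ p, g p = m ∧ x p ≠ 0) := by
  obtain ⟨i0, hi0⟩ := hx
  have hn : 0 < n := i0.pos
  have hne : nz (List.ofFn x) ≠ [] := nz_ofFn_ne_nil i0 hi0
  set δ := (nz (List.ofFn x)).head hne with hδ
  have hδ0 : δ ≠ 0 := nz_mem_ne (List.head_mem hne)
  have hml : mf x (n - 1) = sMinus x := by rw [mf_last x hn, sMinus_eq]
  have hbound : ∀ p : Fin n, mf x (p : ℕ) < sMinus x + 1 := by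
    intro p
    have : mf x (p : ℕ) ≤ mf x (n - 1) := mf_mono x (by omega)
    omega
  refine ⟨δ, fun p => ⟨mf x (p : ℕ), hbound p⟩, hδ0, ?_, ?_, ?_⟩
  · intro p q hpq
    simpa [Fin.le_def] using mf_mono x (by exact_mod_cast hpq)
  · intro p
    rcases eq_or_ne (x p) 0 with h0 | h0
    · simp [h0]
    · have h := mf_sign p h0 hne
      rw [← hδ] at h
      rw [mul_assoc]
      simp only []
      linarith [h]
  · intro m
    have hvm : (m : ℕ) ≤ mf x (n - 1) := by rw [hml]; omega
    obtain ⟨p, hp1, hp2⟩ := mf_attain ⟨i0, hi0⟩ hvm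
    exact ⟨p, by simp [Fin.ext_iff, hp1], hp2⟩

/-- Strict sign on nonzero entries, in the block decomposition. -/
lemma blocks_strict {n : ℕ} {x : Fin n → ℝ} (hx : ∃ i, x i ≠ 0) :
    ∃ (δ : ℝ) (g : Fin n → Fin (sMinus x + 1)),
      δ ≠ 0 ∧ Monotone g ∧ (∀ p, 0 ≤ (-1:ℝ)^(g p : ℕ) * δ * x p) ∧
      (∀ m, ∃ p, g p = m ∧ x p ≠ 0) := blocks hx

/-- Extraction of a strictly alternating chain from a vector with no zero entries. -/
lemma chain {n : ℕ} {w : Fin n → ℝ} (hn : 0 < n) (hw : ∀ i, w i ≠ 0) {k : ℕ}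
    (hk : k ≤ signChanges (List.ofFn w)) :
    ∃ (σ : ℝ) (i : Fin (k+1) → Fin n), σ ≠ 0 ∧ StrictMono i ∧
      ∀ j : Fin (k+1), 0 < (-1:ℝ)^(j:ℕ) * σ * w (i j) := by
  classical
  have hfull : nz (List.ofFn w) = List.ofFn w := by
    apply nz_all_ne
    intro v hv
    obtain ⟨i, rfl⟩ := List.mem_ofFn.1 hv
    exact hw i
  have hne : nz (List.ofFn w) ≠ [] := by
    rw [hfull]; simp [List.ofFn_eq_nil_iff]; omega
  have hml : mf w (n - 1) = signChanges (List.ofFn w) := by rw [mf_last w hn, hfull]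
  have hex : ∀ j : Fin (k+1), ∃ p : Fin n, mf w (p : ℕ) = (j : ℕ) ∧ w p ≠ 0 := by
    intro j
    apply mf_attain ⟨⟨0, hn⟩, hw _⟩
    rw [hml]; omega
  choose iF hiF1 hiF2 using hex
  refine ⟨(nz (List.ofFn w)).head hne, iF, nz_mem_ne (List.head_mem hne), ?_, ?_⟩
  · intro j j' hjj'
    have h1 : mf w (iF j : ℕ) < mf w (iF j' : ℕ) := by
      rw [hiF1 j, hiF1 j']; exact_mod_cast hjj'
    rw [Fin.lt_def]
    by_contra hc
    push_neg at hc
    exact absurd (mf_mono w hc) (by omega)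
  · intro j
    have := mf_sign (iF j) (hiF2 j) hne
    rw [hiF1 j] at this
    rw [mul_assoc]
    linarith

lemma sPlus_le {n : ℕ} (y : Fin n → ℝ) : sPlus y ≤ n - 1 := by
  apply Finset.sup_le
  intro ε _
  have := sc_le_length (List.ofFn fun i => if y i = 0 then (if ε i then (1:ℝ) else -1) else y i)
  simpa using this

end SCAux

namespace SCAux

lemma sMinus_zero_of_all_zero {n : ℕ} {x : Fin n → ℝ} (hx : ∀ i, x i = 0) :
    sMinus x = 0 := by
  rw [sMinus_eq]
  have : nz (List.ofFn x) = [] := by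
    rw [nz, List.filter_eq_nil_iff]
    intro a ha
    obtain ⟨i, rfl⟩ := List.mem_ofFn.1 ha
    simp [hx i]
  rw [this, sc_nil]

lemma sMinus_le_sPlus {n : ℕ} (x : Fin n → ℝ) : sMinus x ≤ sPlus x := by
  classical
  by_cases hx : ∀ i, x i = 0
  · rw [sMinus_zero_of_all_zero hx]; omega
  push_neg at hx
  obtain ⟨i0, hi0⟩ := hx
  have hn : 0 < n := i0.pos
  set w : Fin n → ℝ := fun i => if x i = 0 then (1:ℝ) else x i with hwdef
  have hw : ∀ i, w i ≠ 0 := by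
    intro i
    by_cases h : x i = 0 <;> simp [hwdef, h]
  suffices hmain : sMinus x ≤ signChanges (List.ofFn w) by
    have hweq : (List.ofFn fun i => if x i = 0 then (if (fun _ : Fin n => true) i then (1:ℝ) else -1) else x i)
        = List.ofFn w := by
      congr 1
    calc sMinus x ≤ signChanges (List.ofFn w) := hmain
      _ ≤ sPlus x := by
          rw [← hweq]
          exact Finset.le_sup
            (f := fun ε : Fin n → Bool => signChanges
              (List.ofFn fun i => if x i = 0 then (if ε i then (1:ℝ) else -1) else x i))
            (Finset.mem_univ (fun _ : Fin n => true))
  -- main inequality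
  have hmlx : mf x (n - 1) = sMinus x := by rw [mf_last x hn, sMinus_eq]
  have hex : ∀ j : Fin (sMinus x + 1), ∃ p : Fin n, mf x (p : ℕ) = (j : ℕ) ∧ x p ≠ 0 := by
    intro j
    apply mf_attain ⟨i0, hi0⟩
    rw [hmlx]; omega
  choose pF hp1 hp2 using hex
  have hwx : ∀ j, w (pF j) = x (pF j) := by
    intro j
    rw [hwdef]
    simp [hp2 j]
  have hnex : nz (List.ofFn x) ≠ [] := nz_ofFn_ne_nil i0 hi0
  have hfullw : nz (List.ofFn w) = List.ofFn w := by
    apply nz_all_ne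
    intro v hv
    obtain ⟨i, rfl⟩ := List.mem_ofFn.1 hv
    exact hw i
  have hnew : nz (List.ofFn w) ≠ [] := by
    rw [hfullw]; simp [List.ofFn_eq_nil_iff]; omega
  set δx := (nz (List.ofFn x)).head hnex with hδx
  set δw := (nz (List.ofFn w)).head hnew with hδw
  have hsx : ∀ j : Fin (sMinus x + 1), 0 < (-1:ℝ)^(j:ℕ) * (δx * x (pF j)) := by
    intro j
    have := mf_sign (pF j) (hp2 j) hnex
    rw [hp1 j] at this
    exact this
  have hsw : ∀ j : Fin (sMinus x + 1), 0 < (-1:ℝ)^(mf w (pF j : ℕ)) * (δw * x (pF j)) := by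
    intro j
    have := mf_sign (x := w) (pF j) (by rw [hwx j]; exact hp2 j) hnew
    rw [hwx j] at this
    exact this
  have hK : ∀ j : Fin (sMinus x + 1), 0 < (-1:ℝ)^(mf w (pF j : ℕ) + (j:ℕ)) * (δw * δx) := by
    intro j
    apply pos_of_mul_sq (x := x (pF j))
    have heq : (-1:ℝ)^(mf w (pF j : ℕ) + (j:ℕ)) * (δw * δx) * (x (pF j) * x (pF j))
        = ((-1:ℝ)^(mf w (pF j : ℕ)) * (δw * x (pF j))) * ((-1:ℝ)^(j:ℕ) * (δx * x (pF j))) := by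
      rw [pow_add]; ring
    rw [heq]
    exact mul_pos (hsw j) (hsx j)
  have hpmono : ∀ (v : ℕ) (h : v + 1 ≤ sMinus x), pF ⟨v, by omega⟩ < pF ⟨v+1, by omega⟩ := by
    intro v h
    have h1 : mf x ((pF ⟨v, by omega⟩ : Fin n) : ℕ) < mf x ((pF ⟨v+1, by omega⟩ : Fin n) : ℕ) := by
      rw [hp1, hp1]; simp
    rw [Fin.lt_def]
    by_contra hc
    push_neg at hc
    exact absurd (mf_mono x hc) (by omega)
  have hstep : ∀ (v : ℕ) (h : v + 1 ≤ sMinus x),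
      mf w ((pF ⟨v, by omega⟩ : Fin n) : ℕ) < mf w ((pF ⟨v+1, by omega⟩ : Fin n) : ℕ) := by
    intro v h
    have hle : mf w ((pF ⟨v, by omega⟩ : Fin n) : ℕ) ≤ mf w ((pF ⟨v+1, by omega⟩ : Fin n) : ℕ) :=
      mf_mono w (le_of_lt (hpmono v h))
    rcases lt_or_eq_of_le hle with hlt | heq
    · exact hlt
    · exfalso
      have k1 := hK ⟨v, by omega⟩
      have k2 := hK ⟨v+1, by omega⟩
      rw [← heq] at k2
      have hpow := neg_one_pow_eq k1 k2
      simp only [] at hpow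
      have hexp : mf w ((pF ⟨v, by omega⟩ : Fin n) : ℕ) + ((⟨v+1, by omega⟩ : Fin (sMinus x + 1)) : ℕ)
          = (mf w ((pF ⟨v, by omega⟩ : Fin n) : ℕ) + ((⟨v, by omega⟩ : Fin (sMinus x + 1)) : ℕ)) + 1 := by
        simp
        omega
      rw [hexp] at hpow
      exact neg_one_pow_succ_ne _ hpow
  have hind : ∀ v : ℕ, ∀ h : v ≤ sMinus x, v ≤ mf w ((pF ⟨v, by omega⟩ : Fin n) : ℕ) := by
    intro v
    induction v with
    | zero => omega
    | succ u ih =>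
      intro h
      have := hstep u h
      have := ih (by omega)
      omega
  have hfin := hind (sMinus x) le_rfl
  have hmlw : mf w (n - 1) = signChanges (List.ofFn w) := by rw [mf_last w hn, hfullw]
  have : mf w ((pF ⟨sMinus x, by omega⟩ : Fin n) : ℕ) ≤ mf w (n - 1) := by
    apply mf_mono
    omega
  omega

end SCAux

namespace SCAux

open Matrix

lemma neg_one_pow_sq (k : ℕ) : (-1:ℝ)^k * (-1:ℝ)^k = 1 := by
  rw [← pow_add]
  exact Even.neg_one_pow ⟨k, by omega⟩

/-- All maximal minors of the block-collapsed matrix are positive. -/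
lemma key_minor {n s : ℕ} {P : Matrix (Fin n) (Fin n) ℝ} (hP : IsTP P)
    {g : Fin n → Fin s} (hg : Monotone g) {c : Fin n → ℝ} (hc : ∀ p, 0 ≤ c p)
    (hwit : ∀ m : Fin s, ∃ p, g p = m ∧ c p ≠ 0)
    {r : Fin s → Fin n} (hr : StrictMono r)
    (U : Matrix (Fin n) (Fin s) ℝ)
    (hU : ∀ i m, U i m = ∑ p ∈ Finset.univ.filter (fun p => g p = m), P i p * c p) :
    0 < (U.submatrix r id).det := by
  classical
  have hdet : (U.submatrix r id).det = ((U.submatrix r id)ᵀ).det := (Matrix.det_transpose _).symm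
  rw [hdet]
  have hrows : ((U.submatrix r id)ᵀ : Matrix (Fin s) (Fin s) ℝ)
      = fun m => ∑ p ∈ Finset.univ.filter (fun p => g p = m),
          c p • (fun q => P (r q) p) := by
    funext m q
    simp only [Matrix.transpose_apply, Matrix.submatrix_apply, id_eq]
    rw [hU, Finset.sum_apply]
    apply Finset.sum_congr rfl
    intro p _
    simp [mul_comm]
  rw [show ((U.submatrix r id)ᵀ).det
      = Matrix.detRowAlternating ((U.submatrix r id)ᵀ) from rfl, hrows]
  rw [show (Matrix.detRowAlternating (R := ℝ) (n := Fin s))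
        (fun m => ∑ p ∈ Finset.univ.filter (fun p => g p = m), c p • (fun q => P (r q) p))
      = (Matrix.detRowAlternating (R := ℝ) (n := Fin s)).toMultilinearMap
        (fun m => ∑ p ∈ Finset.univ.filter (fun p => g p = m), c p • (fun q => P (r q) p)) from rfl]
  rw [MultilinearMap.map_sum_finset]
  -- each term
  have hterm : ∀ r' ∈ Fintype.piFinset (fun m : Fin s => Finset.univ.filter (fun p => g p = m)),
      0 ≤ (Matrix.detRowAlternating (R := ℝ) (n := Fin s)).toMultilinearMap
        (fun m => c (r' m) • (fun q => P (r q) (r' m))) := by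
    intro r' hr'
    have hgr' : ∀ m, g (r' m) = m := by
      intro m
      have := (Fintype.mem_piFinset.1 hr') m
      simpa using this
    have hr'mono : StrictMono r' := by
      intro m m' hmm'
      rcases lt_trichotomy (r' m) (r' m') with h | h | h
      · exact h
      · exfalso; rw [← hgr' m, ← hgr' m', h] at hmm'; exact lt_irrefl _ hmm'
      · exfalso
        have := hg h.le
        rw [hgr' m, hgr' m'] at this
        exact absurd hmm' (not_lt.2 this)
    rw [MultilinearMap.map_smul_univ]
    have hPdet : (Matrix.detRowAlternating (R := ℝ) (n := Fin s)).toMultilinearMap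
        (fun m => (fun q => P (r q) (r' m))) = ((P.submatrix r r')ᵀ).det := rfl
    rw [hPdet, smul_eq_mul, Matrix.det_transpose]
    exact mul_nonneg (Finset.prod_nonneg (fun m _ => hc (r' m)))
      (le_of_lt (hP s r r' hr hr'mono))
  -- the positive witness
  set r0 : Fin s → Fin n := fun m => (hwit m).choose with hr0
  have hr0mem : r0 ∈ Fintype.piFinset (fun m : Fin s => Finset.univ.filter (fun p => g p = m)) := by
    rw [Fintype.mem_piFinset]
    intro m
    simp [hr0, (hwit m).choose_spec.1]
  have hr0pos : 0 < (Matrix.detRowAlternating (R := ℝ) (n := Fin s)).toMultilinearMap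
      (fun m => c (r0 m) • (fun q => P (r q) (r0 m))) := by
    have hgr0 : ∀ m, g (r0 m) = m := fun m => (hwit m).choose_spec.1
    have hr0mono : StrictMono r0 := by
      intro m m' hmm'
      rcases lt_trichotomy (r0 m) (r0 m') with h | h | h
      · exact h
      · exfalso; rw [← hgr0 m, ← hgr0 m', h] at hmm'; exact lt_irrefl _ hmm'
      · exfalso
        have := hg h.le
        rw [hgr0 m, hgr0 m'] at this
        exact absurd hmm' (not_lt.2 this)
    rw [MultilinearMap.map_smul_univ]
    have hPdet : (Matrix.detRowAlternating (R := ℝ) (n := Fin s)).toMultilinearMap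
        (fun m => (fun q => P (r q) (r0 m))) = ((P.submatrix r r0)ᵀ).det := rfl
    rw [hPdet, smul_eq_mul, Matrix.det_transpose]
    apply mul_pos
    · apply Finset.prod_pos
      intro m _
      exact lt_of_le_of_ne (hc (r0 m)) (Ne.symm ((hwit m).choose_spec.2))
    · exact hP s r r0 hr hr0mono
  exact Finset.sum_pos' hterm ⟨r0, hr0mem, hr0pos⟩

end SCAux

namespace SCAux

open Matrix

/-- Variation diminishing property of totally positive matrices. -/
lemma vd {n : ℕ} {P : Matrix (Fin n) (Fin n) ℝ} (hP : IsTP P) {x : Fin n → ℝ}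
    (hx : ∃ i, x i ≠ 0) : sPlus (P.mulVec x) ≤ sMinus x := by
  classical
  by_contra hcon
  push_neg at hcon
  set s := sMinus x + 1 with hs
  have hscon : s ≤ sPlus (P.mulVec x) := hcon
  obtain ⟨i0, hi0⟩ := hx
  have hn : 0 < n := i0.pos
  set v : Fin n → ℝ := P.mulVec x with hv
  -- extract ε achieving at least s sign changes
  have hsup : ∃ ε : Fin n → Bool, s ≤ signChanges
      (List.ofFn fun i => if v i = 0 then (if ε i then (1:ℝ) else -1) else v i) := by
    have hbot : (⊥ : ℕ) < s := by simp only [bot_eq_zero']; omega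
    have := (Finset.le_sup_iff hbot).1 hscon
    obtain ⟨ε, _, hε⟩ := this
    exact ⟨ε, hε⟩
  obtain ⟨ε, hε⟩ := hsup
  set w' : Fin n → ℝ := fun i => if v i = 0 then (if ε i then (1:ℝ) else -1) else v i with hw'
  have hw'nz : ∀ i, w' i ≠ 0 := by
    intro i
    by_cases h : v i = 0
    · by_cases h2 : ε i <;> simp [hw', h, h2]
    · simp [hw', h]
  obtain ⟨σ, iC, hσ, hiC, hiCs⟩ := chain hn hw'nz hε
  have hvweak : ∀ j : Fin (s+1), 0 ≤ (-1:ℝ)^(j:ℕ) * σ * v (iC j) := by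
    intro j
    by_cases h : v (iC j) = 0
    · rw [h, mul_zero]
    · have := hiCs j
      have hww : w' (iC j) = v (iC j) := by simp [hw', h]
      rw [hww] at this
      linarith
  -- block decomposition of x
  obtain ⟨δ, g, hδ, hgmono, hsign, hwit⟩ := blocks ⟨i0, hi0⟩
  set c : Fin n → ℝ := fun p => (-1:ℝ)^(g p : ℕ) * δ * x p with hcdef
  have hc : ∀ p, 0 ≤ c p := hsign
  have hcwit : ∀ m : Fin (sMinus x + 1), ∃ p, g p = m ∧ c p ≠ 0 := by
    intro m
    obtain ⟨p, hp1, hp2⟩ := hwit m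
    refine ⟨p, hp1, ?_⟩
    simp only [hcdef]
    exact mul_ne_zero (mul_ne_zero (pow_ne_zero _ (by norm_num)) hδ) hp2
  set U : Matrix (Fin n) (Fin s) ℝ :=
    Matrix.of fun i m => ∑ p ∈ Finset.univ.filter (fun p => g p = m), P i p * c p with hUdef
  have hUapp : ∀ i m, U i m = ∑ p ∈ Finset.univ.filter (fun p => g p = m), P i p * c p :=
    fun i m => rfl
  set wv : Fin s → ℝ := fun m => (-1:ℝ)^(m:ℕ) * δ⁻¹ with hwv
  -- v = U.mulVec wv
  have hvU : ∀ i, v i = ∑ m : Fin s, U i m * wv m := by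
    intro i
    have step1 : ∀ m : Fin s, U i m * wv m
        = ∑ p ∈ Finset.univ.filter (fun p => g p = m), (P i p * c p) * wv (g p) := by
      intro m
      rw [hUapp, Finset.sum_mul]
      apply Finset.sum_congr rfl
      intro p hp
      rw [(Finset.mem_filter.1 hp).2]
    rw [Finset.sum_congr rfl (fun m _ => step1 m)]
    rw [Finset.sum_fiberwise Finset.univ (fun p => g p) (fun p => (P i p * c p) * wv (g p))]
    have : ∀ p, (P i p * c p) * wv (g p) = P i p * x p := by
      intro p
      have h1 : (-1:ℝ)^(g p : ℕ) * (-1:ℝ)^(g p : ℕ) = 1 := neg_one_pow_sq _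
      have h2 : δ * δ⁻¹ = 1 := mul_inv_cancel₀ hδ
      calc (P i p * c p) * wv (g p)
          = (P i p * x p) * (((-1:ℝ)^(g p : ℕ) * (-1:ℝ)^(g p : ℕ)) * (δ * δ⁻¹)) := by
            simp only [hcdef, hwv]; ring
        _ = P i p * x p := by rw [h1, h2]; ring
    rw [Finset.sum_congr rfl (fun p _ => this p)]
    simp [hv, Matrix.mulVec, dotProduct]
  -- minors of U are positive
  have hKey : ∀ (r : Fin s → Fin n), StrictMono r → 0 < (U.submatrix r id).det := by
    intro r hr
    exact key_minor hP hgmono hc hcwit hr U hUapp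
  set M : Matrix (Fin (s+1)) (Fin (s+1)) ℝ :=
    Matrix.of (fun j q => if hq : (q : ℕ) < s then U (iC j) ⟨q, hq⟩ else v (iC j)) with hM
  set W : Fin (s+1) → ℝ := fun q => if hq : (q : ℕ) < s then wv ⟨q, hq⟩ else -1 with hW
  have hMc : ∀ (j : Fin (s+1)) (m : Fin s), M j (Fin.castSucc m) = U (iC j) m := by
    intro j m
    have hlt : ((Fin.castSucc m : Fin (s+1)) : ℕ) < s := by simp
    simp only [hM, Matrix.of_apply]
    rw [dif_pos hlt]
    congr 1
  have hMl : ∀ (j : Fin (s+1)), M j (Fin.last s) = v (iC j) := by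
    intro j
    simp only [hM, Matrix.of_apply]
    rw [dif_neg (by simp)]
  have hWc : ∀ m : Fin s, W (Fin.castSucc m) = wv m := by
    intro m
    have hlt : ((Fin.castSucc m : Fin (s+1)) : ℕ) < s := by simp
    simp only [hW]
    rw [dif_pos hlt]
    congr 1
  have hWl : W (Fin.last s) = -1 := by
    simp only [hW]
    rw [dif_neg (by simp)]
  have hMW : M.mulVec W = 0 := by
    funext j
    simp only [Matrix.mulVec, dotProduct, Pi.zero_apply]
    rw [Fin.sum_univ_castSucc]
    rw [Finset.sum_congr rfl (fun m _ => by rw [hMc j m, hWc m])]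
    rw [hMl j, hWl, ← hvU (iC j)]
    ring
  have hW0 : W ≠ 0 := by
    intro h
    have := congrFun h (Fin.last s)
    rw [hWl] at this
    norm_num at this
  have hdetM : M.det = 0 := Matrix.exists_mulVec_eq_zero_iff.1 ⟨W, hW0, hMW⟩
  have hlap := Matrix.det_succ_column M (Fin.last s)
  rw [hdetM] at hlap
  have hsub : ∀ j : Fin (s+1), (M.submatrix j.succAbove (Fin.last s).succAbove)
      = U.submatrix (iC ∘ j.succAbove) id := by
    intro j
    funext p q
    simp only [Matrix.submatrix_apply, Fin.succAbove_last, id_eq, Function.comp_apply]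
    exact hMc _ q
  have hD : ∀ j : Fin (s+1), 0 < (U.submatrix (iC ∘ j.succAbove) id).det :=
    fun j => hKey _ (hiC.comp (Fin.strictMono_succAbove j))
  have hsum0 : ∑ j : Fin (s+1),
      ((-1:ℝ)^(j:ℕ) * σ * v (iC j)) * (U.submatrix (iC ∘ j.succAbove) id).det = 0 := by
    have hterm : ∀ j : Fin (s+1),
        ((-1:ℝ)^(j:ℕ) * σ * v (iC j)) * (U.submatrix (iC ∘ j.succAbove) id).det
        = (σ * (-1:ℝ)^(s:ℕ)) * ((-1:ℝ)^((j:ℕ)+((Fin.last s):ℕ)) * M j (Fin.last s) *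
            (M.submatrix j.succAbove (Fin.last s).succAbove).det) := by
      intro j
      rw [hsub j, hMl j]
      have hls : ((Fin.last s) : ℕ) = s := rfl
      rw [hls, pow_add (-1:ℝ) (j:ℕ) s]
      have h2 : (-1:ℝ)^(sMinus x * 2) = 1 := by
        rw [mul_comm, pow_mul, neg_one_sq, one_pow]
      linear_combination (-(σ * v (iC j) *
        (U.submatrix (iC ∘ j.succAbove) id).det * (-1:ℝ)^(j:ℕ))) * h2
    rw [Finset.sum_congr rfl (fun j _ => hterm j), ← Finset.mul_sum, ← hlap, mul_zero]
  have hterm0 := (Finset.sum_eq_zero_iff_of_nonneg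
    (fun j _ => mul_nonneg (hvweak j) (hD j).le)).1 hsum0
  have hv0 : ∀ j : Fin (s+1), v (iC j) = 0 := by
    intro j
    have h := hterm0 j (Finset.mem_univ j)
    rcases mul_eq_zero.1 h with h' | h'
    · rcases mul_eq_zero.1 h' with h'' | h''
      · exact absurd h'' (mul_ne_zero (pow_ne_zero _ (by norm_num)) hσ)
      · exact h''
    · exact absurd h' (hD j).ne'
  have hQ : (U.submatrix (iC ∘ Fin.castSucc) id).mulVec wv = 0 := by
    funext m
    simp only [Matrix.mulVec, dotProduct, Matrix.submatrix_apply, id_eq,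
      Function.comp_apply, Pi.zero_apply]
    rw [← hvU (iC (Fin.castSucc m))]
    exact hv0 (Fin.castSucc m)
  have hwv0 : wv ≠ 0 := by
    intro h
    have := congrFun h ⟨0, by omega⟩
    simp only [hwv, Pi.zero_apply] at this
    rw [pow_zero, one_mul] at this
    exact inv_ne_zero hδ this
  have hdetQ0 : (U.submatrix (iC ∘ Fin.castSucc) id).det = 0 :=
    Matrix.exists_mulVec_eq_zero_iff.1 ⟨wv, hwv0, hQ⟩
  have hdetQ := hKey (iC ∘ Fin.castSucc) (hiC.comp Fin.strictMono_castSucc)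
  rw [hdetQ0] at hdetQ
  exact lt_irrefl _ hdetQ

end SCAux


/-- If the transition matrix `Φ(t,t0)` of `ż = A(t)z` is TP for all
`a < t0 < t < b`, then any nontrivial solution `z` satisfies `z(t) ∈ V`, i.e.
`s^-(z(t)) = s^+(z(t))`, for all `t ∈ (a,b)` except possibly up to `n - 1` values. -/
theorem stmt4 {n : ℕ}
    (a b : ℝ) (A : ℝ → Matrix (Fin n) (Fin n) ℝ)
    (Φ : ℝ → ℝ → Matrix (Fin n) (Fin n) ℝ)
    (hreg : GoodCoeff a b A) (htrans : IsTransitionOn a b A Φ)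
    (hTP : ∀ t0 t : ℝ, a < t0 → t0 < t → t < b → IsTP (Φ t t0))
    (z : ℝ → Fin n → ℝ)
    (hz : ∀ t0 ∈ Set.Ioo a b, ∀ t ∈ Set.Ioo a b, t0 ≤ t → z t = (Φ t t0).mulVec (z t0))
    (hz0 : ∃ t1 ∈ Set.Ioo a b, z t1 ≠ 0)
    :
    ∃ S : Finset ℝ, S.card ≤ n - 1 ∧
      ∀ t ∈ Set.Ioo a b, t ∉ S → sMinus (z t) = sPlus (z t) := by
  classical
  obtain ⟨t1, ht1, hz1⟩ := hz0
  rcases Nat.eq_zero_or_pos n with hn0 | hn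
  · exfalso
    subst hn0
    exact hz1 (funext fun i => i.elim0)
  have hΦdet : ∀ t0 t, a < t0 → t0 < t → t < b → (Φ t t0).det ≠ 0 := by
    intro t0 t h1 h2 h3
    have h := hTP t0 t h1 h2 h3 n id id strictMono_id strictMono_id
    rw [Matrix.submatrix_id_id] at h
    exact h.ne'
  have hznz : ∀ t ∈ Set.Ioo a b, z t ≠ 0 := by
    intro t ht hzt
    apply hz1
    rcases lt_trichotomy t t1 with h | h | h
    · have heq := hz t ht t1 ht1 h.le
      rw [heq, hzt, Matrix.mulVec_zero]
    · rw [← h]; exact hzt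
    · have hzeq := hz t1 ht1 t ht h.le
      rw [hzt] at hzeq
      have hdet := hΦdet t1 t ht1.1 h ht.2
      by_contra hne
      exact hdet (Matrix.exists_mulVec_eq_zero_iff.1 ⟨z t1, hne, hzeq.symm⟩)
  have hVD : ∀ t t', t ∈ Set.Ioo a b → t' ∈ Set.Ioo a b → t < t' →
      sPlus (z t') ≤ sMinus (z t) := by
    intro t t' ht ht' hlt
    have hzeq := hz t ht t' ht' hlt.le
    have hx : ∃ i, z t i ≠ 0 := Function.ne_iff.1 (hznz t ht)
    rw [hzeq]
    exact SCAux.vd (hTP t t' ht.1 hlt ht'.2) hx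
  set Bs : Set ℝ := {t | t ∈ Set.Ioo a b ∧ sMinus (z t) ≠ sPlus (z t)} with hBs
  have hblt : ∀ t ∈ Bs, sMinus (z t) < sPlus (z t) := by
    intro t ht
    exact lt_of_le_of_ne (SCAux.sMinus_le_sPlus (z t)) ht.2
  have hmem : ∀ t ∈ Bs, sMinus (z t) ∈ Finset.range (n - 1) := by
    intro t ht
    have h1 := hblt t ht
    have h2 := SCAux.sPlus_le (z t)
    rw [Finset.mem_range]
    omega
  have hanti : ∀ t t', t ∈ Bs → t' ∈ Bs → t < t' → sMinus (z t') < sMinus (z t) := by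
    intro t t' ht ht' hlt
    calc sMinus (z t') < sPlus (z t') := hblt t' ht'
      _ ≤ sMinus (z t) := hVD t t' ht.1 ht'.1 hlt
  have hinj : Set.InjOn (fun t => sMinus (z t)) Bs := by
    intro t ht t' ht' heq
    rcases lt_trichotomy t t' with h | h | h
    · exact absurd heq (hanti t t' ht ht' h).ne'
    · exact h
    · exact absurd heq.symm (hanti t' t ht' ht h).ne'
  have hfin : Bs.Finite := Set.Finite.of_finite_image
    (Set.Finite.subset (Finset.range (n - 1)).finite_toSet
      (by rintro v ⟨t, ht, rfl⟩; exact hmem t ht)) hinj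
  refine ⟨hfin.toFinset, ?_, ?_⟩
  · have hcard := Finset.card_le_card_of_injOn (fun t => sMinus (z t))
      (fun t ht => hmem t (hfin.mem_toFinset.1 ht))
      (fun u hu v hv => hinj (hfin.mem_toFinset.1 hu) (hfin.mem_toFinset.1 hv))
    simpa using hcard
  · intro t ht htS
    by_contra hne
    exact htS (hfin.mem_toFinset.2 ⟨ht, hne⟩)

end
end
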